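/- arXiv:0708.3105 — 7 statements merged into one kernel-verified Lean document; each statement's English description precedes it below -/
import Mathlib

section
/- Let k be an algebraically closed field of characteristic 0 and let F ∈ k[X_1,…,X_m,T] be a polynomial that is monic in T of degree N. Let Z(F) ⊆ k^{m+1} be the zero set of F and let ZZ(F) ⊆ k^{m+1} be the common zero set of F and of its partial derivatives ∂^j F/∂T^j for j = 1,…,⌊N/2⌋. Then the restriction to ZZ(F) of the projection p : k^{m+1} → k^m onto the first m coordinates is a homeomorphism (with respect to the Zariski topologies) of ZZ(F) onto its image, and the image p(ZZ(F)) is Zariski closed in k^m. -/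
open Polynomial

/-- Evaluation of a polynomial `F ∈ k[X_1,…,X_m][T]` at a point `(x,t) ∈ k^m × k`. -/
noncomputable def evXT {k : Type*} [CommSemiring k] {m : ℕ}
    (F : Polynomial (MvPolynomial (Fin m) k)) (x : Fin m → k) (t : k) : k :=
  Polynomial.eval t (F.map (MvPolynomial.eval x))

/-- The Zariski topology on affine `m`-space `k^m`: generated by the basic open sets
`{x | f(x) ≠ 0}` for polynomials `f`. -/
def zariskiAff (k : Type*) [CommSemiring k] (m : ℕ) : TopologicalSpace (Fin m → k) :=
  TopologicalSpace.generateFrom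
    {U | ∃ f : MvPolynomial (Fin m) k, U = {x | MvPolynomial.eval x f ≠ 0}}

/-- The Zariski topology on `k^{m+1} = k^m × k`: generated by the basic open sets
`{(x,t) | F(x,t) ≠ 0}` for polynomials `F ∈ k[X_1,…,X_m,T]`. -/
def zariskiAff' (k : Type*) [CommSemiring k] (m : ℕ) : TopologicalSpace ((Fin m → k) × k) :=
  TopologicalSpace.generateFrom
    {U | ∃ F : Polynomial (MvPolynomial (Fin m) k), U = {p | evXT F p.1 p.2 ≠ 0}}

/-- `ZZ(F)`: the common zero set of `F` and of its derivatives `∂^j F/∂T^j`,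
`j = 1, …, ⌊deg F / 2⌋`. -/
noncomputable def ZZset {k : Type*} [CommSemiring k] {m : ℕ}
    (F : Polynomial (MvPolynomial (Fin m) k)) : Set ((Fin m → k) × k) :=
  {p | ∀ j ≤ F.natDegree / 2, evXT (Polynomial.derivative^[j] F) p.1 p.2 = 0}

/-! ### Auxiliary results -/

section Auxiliary

open TopologicalSpace

/-- Generic fact: the closed sets of the topology generated by the non-vanishing sets of
a ring of functions are exactly the common zero sets of families of functions. -/
theorem isClosed_generateFrom_iff_aux {X P k : Type*} [CommRing P] [Field k]
    (ev : P →+* (X → k)) (C : Set X) :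
    @IsClosed X (generateFrom {U | ∃ f : P, U = {x | ev f x ≠ 0}}) C ↔
      ∃ S : Set P, C = {x | ∀ f ∈ S, ev f x = 0} := by
  constructor
  · intro hC
    have h : GenerateOpen {U | ∃ f : P, U = {x | ev f x ≠ 0}} Cᶜ :=
      hC.isOpen_compl
    have key : ∀ U, GenerateOpen {U | ∃ f : P, U = {x | ev f x ≠ 0}} U →
        ∃ S : Set P, Uᶜ = {x | ∀ f ∈ S, ev f x = 0} := by
      intro U hU
      induction hU with
      | basic U hU =>
        obtain ⟨f, rfl⟩ := hU
        exact ⟨{f}, by ext x; simp⟩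
      | univ =>
        refine ⟨{1}, ?_⟩
        ext x; simp
      | inter U V hU hV ihU ihV =>
        obtain ⟨S, hS⟩ := ihU
        obtain ⟨S', hS'⟩ := ihV
        refine ⟨Set.image2 (· * ·) S S', ?_⟩
        rw [Set.compl_inter, hS, hS']
        ext x
        simp only [Set.mem_union, Set.mem_setOf_eq]
        constructor
        · rintro (h | h) f hf
          · obtain ⟨a, ha, b, hb, rfl⟩ := hf
            rw [map_mul, Pi.mul_apply, h a ha, zero_mul]
          · obtain ⟨a, ha, b, hb, rfl⟩ := hf
            rw [map_mul, Pi.mul_apply, h b hb, mul_zero]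
        · intro h
          by_cases hc : ∀ f ∈ S, ev f x = 0
          · exact Or.inl hc
          · push_neg at hc
            obtain ⟨f₀, hf₀, hf₀x⟩ := hc
            refine Or.inr fun g hg => ?_
            have := h _ (Set.mem_image2_of_mem hf₀ hg)
            rw [map_mul, Pi.mul_apply] at this
            exact (mul_eq_zero.mp this).resolve_left hf₀x
      | sUnion 𝒰 h ih =>
        choose S hS using ih
        refine ⟨⋃ U : 𝒰, S U.1 U.2, ?_⟩
        ext x
        simp only [Set.mem_compl_iff, Set.mem_sUnion, Set.mem_setOf_eq, not_exists, not_and]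
        constructor
        · rintro hx f hf
          simp only [Set.mem_iUnion] at hf
          obtain ⟨⟨U, hU⟩, hf⟩ := hf
          have hxU : x ∈ Uᶜ := fun hh => hx U hU hh
          rw [hS U hU] at hxU
          exact hxU f hf
        · intro hx U hU hxU
          have : x ∈ Uᶜ := by
            rw [hS U hU]
            intro f hf
            exact hx f (Set.mem_iUnion.mpr ⟨⟨U, hU⟩, hf⟩)
          exact this hxU
    obtain ⟨S, hS⟩ := key _ h
    exact ⟨S, by rw [← compl_compl C, hS]⟩
  · rintro ⟨S, rfl⟩
    refine @IsClosed.mk X (generateFrom _) _ ?_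
    have : {x | ∀ f ∈ S, ev f x = 0}ᶜ = ⋃ f ∈ S, {x | ev f x ≠ 0} := by
      ext x; simp
    rw [this]
    exact @isOpen_biUnion _ _ (generateFrom _) _ _
      fun f hf => GenerateOpen.basic _ ⟨f, rfl⟩

end Auxiliary

section Main

set_option maxHeartbeats 1000000

variable {k : Type*} [Field k] [IsAlgClosed k] {m : ℕ}

/-- Lying over, concretely: if `J` is an ideal of `k[X_1,…,X_m][T]` containing a monic
polynomial and all polynomials of `J ∩ k[X_1,…,X_m]` vanish at `x`, then some point `(x,t)`
kills all of `J`. -/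
theorem key_exists {F : Polynomial (MvPolynomial (Fin m) k)} (hF : F.Monic)
    (J : Ideal (Polynomial (MvPolynomial (Fin m) k))) (hFJ : F ∈ J) (x : Fin m → k)
    (hx : ∀ g ∈ J.comap (Polynomial.C :
        MvPolynomial (Fin m) k →+* Polynomial (MvPolynomial (Fin m) k)),
      MvPolynomial.eval x g = 0) :
    ∃ t : k, ∀ h ∈ J, evXT h x t = 0 := by
  classical
  set φ : MvPolynomial (Fin m) k →+* k := MvPolynomial.eval x with hφdef
  set ψ : Polynomial (MvPolynomial (Fin m) k) →+* Polynomial k := Polynomial.mapRingHom φ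
    with hψdef
  have hφs : Function.Surjective φ := fun c => ⟨MvPolynomial.C c, by simp [hφdef]⟩
  have hψs : Function.Surjective ψ := Polynomial.map_surjective φ hφs
  set J' := J.map ψ with hJ'def
  set mk : Polynomial (MvPolynomial (Fin m) k) →ₐ[MvPolynomial (Fin m) k]
      Polynomial (MvPolynomial (Fin m) k) ⧸ J := Ideal.Quotient.mkₐ _ J with hmkdef
  have hmk0 : ∀ a ∈ J, mk a = 0 := fun a ha => by
    show Ideal.Quotient.mk J a = 0
    exact (Ideal.Quotient.eq_zero_iff_mem).mpr ha
  have hmksum : ∀ a : Polynomial (MvPolynomial (Fin m) k), ∀ n, a.natDegree < n →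
      mk a = ∑ i ∈ Finset.range n, a.coeff i • mk (X ^ i) := by
    intro a n hn
    conv_lhs => rw [Polynomial.as_sum_range' a n hn]
    rw [map_sum]
    refine Finset.sum_congr rfl fun i _ => ?_
    rw [← Polynomial.C_mul_X_pow_eq_monomial, ← Polynomial.smul_eq_C_mul, map_smul]
  -- the quotient is a finite module over the MvPolynomial ring
  have hfg : (⊤ : Submodule (MvPolynomial (Fin m) k)
      (Polynomial (MvPolynomial (Fin m) k) ⧸ J)).FG := by
    refine ⟨(Finset.range (F.natDegree + 1)).image (fun i => mk (X ^ i)), ?_⟩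
    rw [eq_top_iff]
    rintro z -
    obtain ⟨a, rfl⟩ := Ideal.Quotient.mk_surjective z
    show mk a ∈ _
    have h1 : mk a = mk (a %ₘ F) := by
      conv_lhs => rw [← Polynomial.modByMonic_add_div a F]
      rw [map_add, map_mul, hmk0 F hFJ]
      ring
    have hdeg : (a %ₘ F).natDegree < F.natDegree + 1 := by
      by_cases hz : a %ₘ F = 0
      · simp [hz]
      · exact Nat.lt_succ_of_le (Polynomial.natDegree_le_natDegree
          (le_of_lt (Polynomial.degree_modByMonic_lt a hF)))
    rw [h1, hmksum _ _ hdeg]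
    refine Submodule.sum_mem _ fun i hi => ?_
    exact Submodule.smul_mem _ _ (Submodule.subset_span
      (by simp only [Finset.coe_image, Set.mem_image, Finset.mem_coe]; exact ⟨i, hi, rfl⟩))
  -- J' is proper
  have hJ' : J' ≠ ⊤ := by
    intro htop
    have h1 : (1 : Polynomial k) ∈ J' := htop ▸ Submodule.mem_top
    rw [hJ'def, Ideal.mem_map_iff_of_surjective ψ hψs] at h1
    obtain ⟨h, hhJ, hψh⟩ := h1
    have hcoeff : ∀ i, ((1 : Polynomial (MvPolynomial (Fin m) k)) - h).coeff i ∈ RingHom.ker φ := by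
      intro i
      have hψe : ψ (1 - h) = 0 := by rw [map_sub, hψh, map_one, sub_self]
      have hc : φ (((1 : Polynomial (MvPolynomial (Fin m) k)) - h).coeff i)
          = (ψ (1 - h)).coeff i := (Polynomial.coeff_map φ i).symm
      rw [hψe, Polynomial.coeff_zero] at hc
      simpa [RingHom.mem_ker] using hc
    have hone : (1 : Polynomial (MvPolynomial (Fin m) k) ⧸ J) ∈ (RingHom.ker φ) •
        (⊤ : Submodule (MvPolynomial (Fin m) k) (Polynomial (MvPolynomial (Fin m) k) ⧸ J)) := by
      have hmke : mk (1 - h) = 1 := by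
        rw [map_sub, hmk0 h hhJ, sub_zero, map_one]
      rw [← hmke, hmksum _ _ (Nat.lt_succ_self _)]
      exact Submodule.sum_mem _ fun i _ =>
        Submodule.smul_mem_smul (hcoeff i) Submodule.mem_top
    have hstable : ∀ u ∈ (RingHom.ker φ) •
        (⊤ : Submodule (MvPolynomial (Fin m) k) (Polynomial (MvPolynomial (Fin m) k) ⧸ J)),
        ∀ z : Polynomial (MvPolynomial (Fin m) k) ⧸ J,
        z * u ∈ (RingHom.ker φ) •
          (⊤ : Submodule (MvPolynomial (Fin m) k) (Polynomial (MvPolynomial (Fin m) k) ⧸ J)) := by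
      intro u hu
      refine Submodule.smul_induction_on hu ?_ ?_
      · intro c hc v _ z
        rw [mul_smul_comm]
        exact Submodule.smul_mem_smul hc Submodule.mem_top
      · intro u₁ u₂ h₁ h₂ z
        rw [mul_add]
        exact Submodule.add_mem _ (h₁ z) (h₂ z)
    have htop' : (⊤ : Submodule (MvPolynomial (Fin m) k)
        (Polynomial (MvPolynomial (Fin m) k) ⧸ J)) ≤ (RingHom.ker φ) • ⊤ := by
      rintro z -
      have hz : z = z * 1 := (mul_one z).symm
      rw [hz]
      exact hstable 1 hone z
    obtain ⟨r, hr1, hr0⟩ :=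
      Submodule.exists_sub_one_mem_and_smul_eq_zero_of_fg_of_le_smul
        (RingHom.ker φ) ⊤ hfg htop'
    have h0 : r • (1 : Polynomial (MvPolynomial (Fin m) k) ⧸ J) = 0 := hr0 1 Submodule.mem_top
    have hCr : Polynomial.C r ∈ J := by
      rw [← Ideal.Quotient.eq_zero_iff_mem]
      show mk (Polynomial.C r) = 0
      have hCr1 : (Polynomial.C r : Polynomial (MvPolynomial (Fin m) k))
          = r • (1 : Polynomial (MvPolynomial (Fin m) k)) := by
        rw [Polynomial.smul_eq_C_mul, mul_one]
      rw [hCr1, map_smul, map_one]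
      exact h0
    have hφr : φ r = 0 := hx r (Ideal.mem_comap.mpr hCr)
    have hker : φ (r - 1) = 0 := by simpa [RingHom.mem_ker] using hr1
    rw [map_sub, hφr, map_one, zero_sub, neg_eq_zero] at hker
    exact one_ne_zero hker
  -- find a maximal ideal above J' and a root
  obtain ⟨𝔪, h𝔪max, h𝔪⟩ := Ideal.exists_le_maximal J' hJ'
  obtain ⟨p, hp'⟩ := (IsPrincipalIdealRing.principal 𝔪).1
  have hp : 𝔪 = Ideal.span {p} := hp'
  have hFmem : ψ F ∈ 𝔪 := h𝔪 (Ideal.mem_map_of_mem ψ hFJ)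
  have hp0 : p ≠ 0 := by
    rintro rfl
    rw [Ideal.span_singleton_eq_bot.mpr rfl] at hp
    have hne : ψ F ≠ 0 := (hF.map φ).ne_zero
    rw [hp] at hFmem
    exact hne (Ideal.mem_bot.mp hFmem)
  have hpu : ¬ IsUnit p := by
    intro hu
    rw [Ideal.span_singleton_eq_top.mpr hu] at hp
    exact h𝔪max.ne_top hp
  have hpdeg : p.degree ≠ 0 := by
    intro hdeg
    have hpc : p = Polynomial.C (p.coeff 0) := Polynomial.eq_C_of_degree_le_zero (le_of_eq hdeg)
    have hc : p.coeff 0 ≠ 0 := by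
      intro h0
      rw [hpc, h0, map_zero] at hp0
      exact hp0 rfl
    exact hpu (hpc ▸ Polynomial.isUnit_C.mpr (isUnit_iff_ne_zero.mpr hc))
  obtain ⟨t, ht⟩ := IsAlgClosed.exists_root p hpdeg
  refine ⟨t, fun h hh => ?_⟩
  have hm : ψ h ∈ 𝔪 := h𝔪 (Ideal.mem_map_of_mem ψ hh)
  rw [hp, Ideal.mem_span_singleton] at hm
  obtain ⟨q, hq⟩ := hm
  show Polynomial.eval t (h.map φ) = 0
  have hrw : h.map φ = ψ h := rfl
  rw [hrw, hq, Polynomial.eval_mul, ht, zero_mul]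

/-- The evaluation at `(x,t)` as a ring hom. -/
noncomputable def evRH {k : Type*} [CommSemiring k] {m : ℕ} (x : Fin m → k) (t : k) :
    Polynomial (MvPolynomial (Fin m) k) →+* k :=
  (Polynomial.evalRingHom t).comp (Polynomial.mapRingHom (MvPolynomial.eval x))

theorem evRH_apply {k : Type*} [CommSemiring k] {m : ℕ} (x : Fin m → k) (t : k)
    (F : Polynomial (MvPolynomial (Fin m) k)) : evRH x t F = evXT F x t := rfl

theorem evXT_C {k : Type*} [CommSemiring k] {m : ℕ} (x : Fin m → k) (t : k)
    (g : MvPolynomial (Fin m) k) : evXT (Polynomial.C g) x t = MvPolynomial.eval x g := by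
  rw [evXT, Polynomial.map_C, Polynomial.eval_C]

/-- The projection of the intersection of `ZZ(F)` with any zero locus is a zero locus. -/
theorem proj_zero_locus {F : Polynomial (MvPolynomial (Fin m) k)} (hF : F.Monic)
    (S : Set (Polynomial (MvPolynomial (Fin m) k))) :
    ∃ T : Set (MvPolynomial (Fin m) k),
      Prod.fst '' (ZZset F ∩ {p | ∀ h ∈ S, evXT h p.1 p.2 = 0})
        = {x | ∀ g ∈ T, MvPolynomial.eval x g = 0} := by
  classical
  set Sgen : Set (Polynomial (MvPolynomial (Fin m) k)) :=
    {h | ∃ j ≤ F.natDegree / 2, Polynomial.derivative^[j] F = h} with hSgen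
  set J := Ideal.span (S ∪ Sgen) with hJ
  have hFJ : F ∈ J := Ideal.subset_span (Set.mem_union_right _ ⟨0, Nat.zero_le _, rfl⟩)
  refine ⟨↑(J.comap (Polynomial.C :
      MvPolynomial (Fin m) k →+* Polynomial (MvPolynomial (Fin m) k))), ?_⟩
  ext x
  simp only [Set.mem_image, Set.mem_setOf_eq, SetLike.mem_coe]
  constructor
  · rintro ⟨⟨x', t⟩, ⟨hzz, hS⟩, rfl⟩
    intro g hg
    have hker : J ≤ RingHom.ker (evRH x' t) := by
      rw [hJ, Ideal.span_le]
      rintro h (hh | ⟨j, hj, rfl⟩)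
      · exact hS h hh
      · exact hzz j hj
    have := hker (Ideal.mem_comap.mp hg)
    rw [RingHom.mem_ker, evRH_apply, evXT_C] at this
    exact this
  · intro hx
    obtain ⟨t, ht⟩ := key_exists hF J hFJ x (fun g hg => hx g hg)
    refine ⟨(x, t), ⟨?_, ?_⟩, rfl⟩
    · intro j hj
      exact ht _ (Ideal.subset_span (Set.mem_union_right _ ⟨j, hj, rfl⟩))
    · intro h hh
      exact ht _ (Ideal.subset_span (Set.mem_union_left _ hh))

/-- On `ZZ(F)`, the coordinate `t` is uniquely determined by `x`. -/
theorem zz_injOn (F : Polynomial (MvPolynomial (Fin m) k)) [CharZero k] (hF : F.Monic) :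
    Set.InjOn Prod.fst (ZZset F) := by
  classical
  rintro ⟨x, t⟩ hxt ⟨x', t'⟩ hxt' (h : x = x')
  subst h
  suffices ht : t = t' by rw [ht]
  set d := F.natDegree / 2 with hd
  set P : Polynomial k := F.map (MvPolynomial.eval x) with hP
  have hPm : P.Monic := hF.map _
  have hP0 : P ≠ 0 := hPm.ne_zero
  have hmult : ∀ s : k, (x, s) ∈ ZZset F → d < P.rootMultiplicity s := by
    intro s hs
    rw [Polynomial.lt_rootMultiplicity_iff_isRoot_iterate_derivative hP0]
    intro j hj
    have := hs j hj
    show Polynomial.IsRoot _ s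
    rw [hP, Polynomial.iterate_derivative_map]
    exact this
  by_contra hne
  have hcard : P.roots.card = P.natDegree :=
    Polynomial.splits_iff_card_roots.mp (IsAlgClosed.splits P)
  have hle : Multiset.replicate (d+1) t + Multiset.replicate (d+1) t' ≤ P.roots := by
    rw [Multiset.le_iff_count]
    intro a
    rw [Multiset.count_add, Multiset.count_replicate, Multiset.count_replicate,
      Polynomial.count_roots]
    by_cases h1 : t = a
    · subst h1
      rw [if_pos rfl, if_neg (fun h => hne h.symm), add_zero]
      exact hmult t hxt
    · rw [if_neg h1]
      by_cases h2 : t' = a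
      · subst h2
        rw [if_pos rfl, zero_add]
        exact hmult t' hxt'
      · rw [if_neg h2]
        exact Nat.zero_le _
  have := Multiset.card_le_card hle
  rw [Multiset.card_add, Multiset.card_replicate, Multiset.card_replicate, hcard, hP,
    hF.natDegree_map] at this
  omega

end Main

/-- Lemma 2.1: let `k` be an algebraically closed field of characteristic
0 and `F ∈ k[X_1,…,X_m,T]` monic in `T`.  Then the projection `p : k^{m+1} → k^m` onto the
first `m` coordinates restricts to a homeomorphism of `ZZ(F)` onto its image (Zariski
topologies), and the image `p(ZZ(F))` is Zariski closed in `k^m`. -/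
theorem zzSet_proj_homeomorph {k : Type*} [Field k] [IsAlgClosed k] [CharZero k] {m : ℕ}
    (F : Polynomial (MvPolynomial (Fin m) k)) (hF : F.Monic) :
    (∃ e : @Homeomorph (ZZset F) (Prod.fst '' ZZset F)
        (@instTopologicalSpaceSubtype _ _ (zariskiAff' k m))
        (@instTopologicalSpaceSubtype _ _ (zariskiAff k m)),
      ∀ z : ZZset F, (e z : Fin m → k) = (z : (Fin m → k) × k).1) ∧
    @IsClosed _ (zariskiAff k m) (Prod.fst '' ZZset F) := by
  classical
  letI τ : TopologicalSpace (Fin m → k) := zariskiAff k m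
  letI τ' : TopologicalSpace ((Fin m → k) × k) := zariskiAff' k m
  -- characterization of closed sets in the two Zariski topologies
  have hτclosed : ∀ C : Set (Fin m → k), IsClosed C ↔
      ∃ S : Set (MvPolynomial (Fin m) k), C = {x | ∀ f ∈ S, MvPolynomial.eval x f = 0} :=
    fun C => isClosed_generateFrom_iff_aux
      (Pi.ringHom fun x : Fin m → k => (MvPolynomial.eval x :
        MvPolynomial (Fin m) k →+* k)) C
  have hτ'closed : ∀ C : Set ((Fin m → k) × k), IsClosed C ↔
      ∃ S : Set (Polynomial (MvPolynomial (Fin m) k)),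
        C = {p | ∀ h ∈ S, evXT h p.1 p.2 = 0} :=
    fun C => isClosed_generateFrom_iff_aux
      (Pi.ringHom fun p : (Fin m → k) × k => evRH p.1 p.2) C
  -- the image is closed
  have himgclosed : IsClosed (Prod.fst '' ZZset F) := by
    obtain ⟨T, hT⟩ := proj_zero_locus hF (∅ : Set (Polynomial (MvPolynomial (Fin m) k)))
    refine (hτclosed _).mpr ⟨T, ?_⟩
    rw [← hT]
    congr 1
    ext p
    simp [ZZset]
  -- continuity of the projection
  have hfstc : @Continuous _ _ τ' τ Prod.fst := by
    apply continuous_generateFrom_iff.mpr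
    rintro U ⟨f, rfl⟩
    exact TopologicalSpace.GenerateOpen.basic _
      ⟨Polynomial.C f, by ext p; simp [evXT_C]⟩
  have hinj := zz_injOn F hF
  refine ⟨⟨{ toEquiv := Equiv.Set.imageOfInjOn Prod.fst (ZZset F) hinj
             continuous_toFun := ?_
             continuous_invFun := ?_ }, fun z => rfl⟩, himgclosed⟩
  · exact Continuous.subtype_mk (hfstc.comp continuous_subtype_val) _
  · rw [continuous_iff_isClosed]
    intro V hV
    obtain ⟨D, hD, rfl⟩ := isClosed_induced_iff.mp hV
    obtain ⟨S, rfl⟩ := (hτ'closed D).mp hD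
    obtain ⟨T, hT⟩ := proj_zero_locus hF S
    have himg : (Equiv.Set.imageOfInjOn Prod.fst (ZZset F) hinj).symm ⁻¹'
          (Subtype.val ⁻¹' {p | ∀ h ∈ S, evXT h p.1 p.2 = 0})
        = Subtype.val ⁻¹'
          (Prod.fst '' (ZZset F ∩ {p | ∀ h ∈ S, evXT h p.1 p.2 = 0})) := by
      rw [← Equiv.image_eq_preimage_symm]
      ext ⟨y, hy⟩
      constructor
      · rintro ⟨⟨z, hz⟩, hzV, hze⟩
        have : y = z.1 := congrArg Subtype.val hze.symm
        exact ⟨z, ⟨hz, hzV⟩, this.symm⟩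
      · rintro ⟨p, ⟨hpZZ, hpD⟩, hpy⟩
        exact ⟨⟨p, hpZZ⟩, hpD, Subtype.ext hpy⟩
    show IsClosed ((Equiv.Set.imageOfInjOn Prod.fst (ZZset F) hinj).symm ⁻¹'
      (Subtype.val ⁻¹' {p | ∀ h ∈ S, evXT h p.1 p.2 = 0}))
    rw [himg, hT]
    exact IsClosed.preimage continuous_subtype_val ((hτclosed _).mpr ⟨T, rfl⟩)
end

section
/- Let k be an algebraically closed field of characteristic 0, let V ⊆ k^m be an irreducible affine variety with affine coordinate ring A = k[X_1,…,X_m]/I(V), and let h be an element of the integral closure of A in its fraction field. Then h is weakly subintegral over A if and only if there exists a polynomial F ∈ k[X_1,…,X_m,T], monic in T, such that Γ_h ⊆ p^{-1}(V) ∩ ZZ(F). -/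
open Polynomial

/-- An element `b` is weakly subintegral over a subset (subring) `R` of `B`:
there are `q ≥ 0` and `a_i ∈ R` (`1 ≤ i ≤ 2q+1`) with
`b^n + ∑_{i=1}^n (n choose i) a_i b^{n-i} = 0` for `q+1 ≤ n ≤ 2q+1`. -/
def WSubOver {B : Type*} [CommRing B] (R : Set B) (b : B) : Prop :=
  ∃ q : ℕ, ∃ a : ℕ → B, (∀ i, a i ∈ R) ∧
    ∀ n, q + 1 ≤ n → n ≤ 2 * q + 1 →
      b ^ n + ∑ i ∈ Finset.Icc 1 n, (n.choose i : B) * a i * b ^ (n - i) = 0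

/-- The graph `Γ_h ⊆ Reg(h) × k` of a rational function `h` on the variety `V`:
pairs `(x, h(x))` where `h` is regular at `x ∈ V`, i.e. `h = g/f` with `f(x) ≠ 0`. -/
noncomputable def graphSet {k : Type*} [Field k] {m : ℕ} (V : Set (Fin m → k))
    (h : FractionRing (MvPolynomial (Fin m) k ⧸ MvPolynomial.vanishingIdeal k V)) :
    Set ((Fin m → k) × k) :=
  {p | p.1 ∈ V ∧ ∃ f g : MvPolynomial (Fin m) k,
    MvPolynomial.eval p.1 f ≠ 0 ∧
    h * algebraMap (MvPolynomial (Fin m) k ⧸ MvPolynomial.vanishingIdeal k V) _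
          (Ideal.Quotient.mk (MvPolynomial.vanishingIdeal k V) f)
      = algebraMap (MvPolynomial (Fin m) k ⧸ MvPolynomial.vanishingIdeal k V) _
          (Ideal.Quotient.mk (MvPolynomial.vanishingIdeal k V) g) ∧
    p.2 * MvPolynomial.eval p.1 f = MvPolynomial.eval p.1 g}

/-! ### Auxiliary lemmas -/

/-- The family of "weak subintegrality" polynomials `T^n + ∑ (n choose i) a_i T^{n-i}`. -/
noncomputable def GnPoly {K : Type*} [CommRing K] (a : ℕ → K) (n : ℕ) : Polynomial K :=
  ∑ i ∈ Finset.range (n + 1), C ((n.choose i : K) * a i) * X ^ (n - i)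

lemma choose_ident (n i : ℕ) : (n + 1).choose i * (n + 1 - i) = (n + 1) * n.choose i := by
  rw [← Nat.choose_succ_right_eq, Nat.add_one_mul_choose_eq]

lemma derivative_GnPoly {K : Type*} [CommRing K] (a : ℕ → K) (n : ℕ) :
    derivative (GnPoly a (n + 1)) = C ((n + 1 : ℕ) : K) * GnPoly a n := by
  unfold GnPoly
  rw [map_sum, Finset.sum_range_succ, Finset.mul_sum]
  have h0 : derivative (C (((n + 1).choose (n + 1) : K) * a (n + 1)) * X ^ (n + 1 - (n + 1)))
      = 0 := by simp
  rw [h0, add_zero]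
  refine Finset.sum_congr rfl fun i hi => ?_
  rw [Finset.mem_range] at hi
  rw [derivative_C_mul, derivative_X_pow]
  have he : n + 1 - i - 1 = n - i := by omega
  have hc : (((n + 1).choose i : ℕ) : K) * ((n + 1 - i : ℕ) : K)
      = ((n + 1 : ℕ) : K) * ((n.choose i : ℕ) : K) := by
    rw [← Nat.cast_mul, ← Nat.cast_mul, choose_ident]
  rw [he, ← mul_assoc, ← C_mul]
  rw [show (((n + 1).choose i : K) * a i) * ((n + 1 - i : ℕ) : K)
      = ((n + 1 : ℕ) : K) * ((n.choose i : K) * a i) by linear_combination a i * hc]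
  rw [C_mul, mul_assoc]

lemma iterate_derivative_GnPoly {K : Type*} [CommRing K] (a : ℕ → K) (n : ℕ) :
    ∀ j, j ≤ n → derivative^[j] (GnPoly a n)
      = C ((n.descFactorial j : K)) * GnPoly a (n - j) := by
  intro j
  induction j with
  | zero => intro _; simp
  | succ j ih =>
    intro hj
    rw [Function.iterate_succ_apply', ih (by omega), derivative_C_mul]
    have hn : n - j = (n - (j + 1)) + 1 := by omega
    rw [hn, derivative_GnPoly, ← mul_assoc, ← C_mul]
    congr 2
    have hnat : n.descFactorial j * (n - (j + 1) + 1) = n.descFactorial (j + 1) := by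
      rw [Nat.descFactorial_succ]
      have h2 : n - (j + 1) + 1 = n - j := by omega
      rw [h2, Nat.mul_comm]
    rw [← Nat.cast_mul, hnat]

lemma range_succ_eq_insert (n : ℕ) : Finset.range (n + 1) = insert 0 (Finset.Icc 1 n) := by
  ext x
  simp only [Finset.mem_range, Finset.mem_insert, Finset.mem_Icc]
  omega

lemma eval_GnPoly {K : Type*} [CommRing K] (a : ℕ → K) (ha0 : a 0 = 1) (b : K) (n : ℕ) :
    Polynomial.eval b (GnPoly a n)
      = b ^ n + ∑ i ∈ Finset.Icc 1 n, (n.choose i : K) * a i * b ^ (n - i) := by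
  unfold GnPoly
  rw [eval_finset_sum, range_succ_eq_insert, Finset.sum_insert (by simp)]
  simp only [eval_mul, eval_C, eval_pow, eval_X]
  rw [ha0]
  simp

/-- Clearing denominators: `∑ P_i g^i f^(d-i)`. -/
noncomputable def clearQ {k : Type*} [CommSemiring k] {m : ℕ}
    (P : Polynomial (MvPolynomial (Fin m) k)) (f g : MvPolynomial (Fin m) k) (d : ℕ) :
    MvPolynomial (Fin m) k :=
  ∑ i ∈ Finset.range (d + 1), P.coeff i * g ^ i * f ^ (d - i)

lemma map_clearQ {k : Type*} [CommSemiring k] {m : ℕ} {S : Type*} [CommRing S]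
    (ψ : MvPolynomial (Fin m) k →+* S)
    (P : Polynomial (MvPolynomial (Fin m) k)) (f g : MvPolynomial (Fin m) k)
    {d : ℕ} (hd : P.natDegree < d + 1) (t : S) (ht : t * ψ f = ψ g) :
    ψ (clearQ P f g d) = Polynomial.eval t (P.map ψ) * (ψ f) ^ d := by
  unfold clearQ
  rw [map_sum, Polynomial.eval_eq_sum_range'
    (lt_of_le_of_lt (Polynomial.natDegree_map_le) hd), Finset.sum_mul]
  refine Finset.sum_congr rfl fun i hi => ?_
  rw [Finset.mem_range] at hi
  rw [map_mul, map_mul, map_pow, map_pow, Polynomial.coeff_map, ← ht, mul_pow]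
  have hpow : ψ f ^ i * ψ f ^ (d - i) = ψ f ^ d := by
    rw [← pow_add]
    congr 1
    omega
  linear_combination (ψ (P.coeff i)) * t ^ i * hpow

lemma iterate_derivative_X_mul {R : Type*} [CommRing R] (P : Polynomial R) (j : ℕ) :
    derivative^[j + 1] (X * P) =
      C ((j + 1 : ℕ) : R) * derivative^[j] P + X * derivative^[j + 1] P := by
  induction j with
  | zero => simp [derivative_mul]
  | succ j ih =>
    rw [Function.iterate_succ_apply', ih, derivative_add, derivative_C_mul, derivative_mul,
      derivative_X, one_mul, ← Function.iterate_succ_apply' derivative,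
      ← Function.iterate_succ_apply' derivative]
    have hC : (C (((j + 1) + 1 : ℕ) : R) : Polynomial R) = C ((j + 1 : ℕ) : R) + 1 := by
      push_cast
      rw [map_add, map_one]
    rw [hC]
    ring

lemma wsub_of_poly {K : Type*} [Field K] (R : Set K)
    (h0 : (0 : K) ∈ R) (hmul : ∀ x ∈ R, ∀ y ∈ R, x * y ∈ R)
    (hinv : ∀ n : ℕ, n ≠ 0 → ((n : K))⁻¹ ∈ R)
    (hchar : ∀ n : ℕ, n ≠ 0 → (n : K) ≠ 0)
    (b : K) (q : ℕ) (H : Polynomial K) (hH : H.Monic) (hdeg : H.natDegree = 2 * q + 1)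
    (hcoeff : ∀ i, H.coeff i ∈ R)
    (hvan : ∀ j ≤ q, Polynomial.eval b (Polynomial.derivative^[j] H) = 0) :
    WSubOver R b := by
  classical
  set a : ℕ → K := fun i =>
    if i ≤ 2 * q + 1 then (((2 * q + 1).choose i : K))⁻¹ * H.coeff (2 * q + 1 - i) else 0 with ha
  refine ⟨q, a, ?_, ?_⟩
  · intro i
    by_cases hi : i ≤ 2 * q + 1
    · simp only [ha, if_pos hi]
      exact hmul _ (hinv _ (Nat.choose_pos hi).ne') _ (hcoeff _)
    · simp only [ha, if_neg hi]
      exact h0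
  · have ha0 : a 0 = 1 := by
      simp only [ha, if_pos (Nat.zero_le _)]
      rw [Nat.choose_zero_right, Nat.sub_zero, ← hdeg, Polynomial.Monic.coeff_natDegree hH]
      simp
    have hGH : GnPoly a (2 * q + 1) = H := by
      have hlt : H.natDegree < 2 * q + 1 + 1 := by omega
      conv_rhs => rw [Polynomial.as_sum_range' H (2 * q + 1 + 1) hlt,
        ← Finset.sum_range_reflect]
      unfold GnPoly
      refine Finset.sum_congr rfl fun i hi => ?_
      rw [Finset.mem_range] at hi
      have hi' : i ≤ 2 * q + 1 := by omega
      have hidx : 2 * q + 1 + 1 - 1 - i = 2 * q + 1 - i := by omega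
      rw [hidx]
      simp only [ha, if_pos hi']
      rw [← mul_assoc, mul_inv_cancel₀ (hchar _ (Nat.choose_pos hi').ne'), one_mul,
        Polynomial.C_mul_X_pow_eq_monomial]
    intro n hn1 hn2
    have hiter := iterate_derivative_GnPoly a (2 * q + 1) (2 * q + 1 - n) (by omega)
    rw [hGH] at hiter
    have hvn := hvan (2 * q + 1 - n) (by omega)
    rw [hiter, Polynomial.eval_mul, Polynomial.eval_C] at hvn
    have hNn' : 2 * q + 1 - (2 * q + 1 - n) = n := by omega
    rw [hNn'] at hvn
    have hdesc : (((2 * q + 1).descFactorial (2 * q + 1 - n) : ℕ) : K) ≠ 0 := by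
      refine hchar _ ?_
      rw [Ne, Nat.descFactorial_eq_zero_iff_lt]
      omega
    have hfin := (mul_eq_zero.mp hvn).resolve_left hdesc
    rw [eval_GnPoly a ha0 b n] at hfin
    exact hfin

set_option maxHeartbeats 1000000 in
set_option synthInstance.maxHeartbeats 400000 in
lemma graph_vanish_of_eval {k : Type*} [Field k] {m : ℕ} (V : Set (Fin m → k))
    [hVirr : (MvPolynomial.vanishingIdeal k V).IsPrime]
    (h : FractionRing (MvPolynomial (Fin m) k ⧸ MvPolynomial.vanishingIdeal k V))
    (P : Polynomial (MvPolynomial (Fin m) k))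
    (hev : Polynomial.eval h
      ((P.map (Ideal.Quotient.mk (MvPolynomial.vanishingIdeal k V))).map
        (algebraMap (MvPolynomial (Fin m) k ⧸ MvPolynomial.vanishingIdeal k V)
          (FractionRing (MvPolynomial (Fin m) k ⧸ MvPolynomial.vanishingIdeal k V)))) = 0) :
    ∀ p ∈ graphSet V h, evXT P p.1 p.2 = 0 := by
  rintro ⟨x, t⟩ ⟨hx, f, g, hf0, hfg, htf⟩
  rw [Polynomial.map_map] at hev
  have h1 : ((algebraMap (MvPolynomial (Fin m) k ⧸ MvPolynomial.vanishingIdeal k V)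
      (FractionRing (MvPolynomial (Fin m) k ⧸ MvPolynomial.vanishingIdeal k V))).comp
        (Ideal.Quotient.mk (MvPolynomial.vanishingIdeal k V)))
      (clearQ P f g P.natDegree) = 0 := by
    rw [map_clearQ _ P f g (Nat.lt_succ_self _) h hfg, hev, zero_mul]
  have h2 : Ideal.Quotient.mk (MvPolynomial.vanishingIdeal k V) (clearQ P f g P.natDegree) = 0 := by
    apply IsFractionRing.injective (MvPolynomial (Fin m) k ⧸ MvPolynomial.vanishingIdeal k V)
      (FractionRing (MvPolynomial (Fin m) k ⧸ MvPolynomial.vanishingIdeal k V))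
    rw [map_zero]
    exact h1
  have hQI : clearQ P f g P.natDegree ∈ MvPolynomial.vanishingIdeal k V :=
    (Ideal.Quotient.eq_zero_iff_mem).mp h2
  have h3 := map_clearQ (MvPolynomial.eval x) P f g (Nat.lt_succ_self _) t htf
  have h4 : MvPolynomial.eval x (clearQ P f g P.natDegree) = 0 := hQI x hx
  rw [h4] at h3
  exact (mul_eq_zero.mp h3.symm).resolve_right (pow_ne_zero _ hf0)

set_option maxHeartbeats 1000000 in
set_option synthInstance.maxHeartbeats 400000 in
lemma eval_of_graph_vanish {k : Type*} [Field k] {m : ℕ} (V : Set (Fin m → k))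
    [hVirr : (MvPolynomial.vanishingIdeal k V).IsPrime]
    (h : FractionRing (MvPolynomial (Fin m) k ⧸ MvPolynomial.vanishingIdeal k V))
    (P : Polynomial (MvPolynomial (Fin m) k))
    (hvan : ∀ p ∈ graphSet V h, evXT P p.1 p.2 = 0) :
    Polynomial.eval h
      ((P.map (Ideal.Quotient.mk (MvPolynomial.vanishingIdeal k V))).map
        (algebraMap (MvPolynomial (Fin m) k ⧸ MvPolynomial.vanishingIdeal k V)
          (FractionRing (MvPolynomial (Fin m) k ⧸ MvPolynomial.vanishingIdeal k V)))) = 0 := by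
  rw [Polynomial.map_map]
  obtain ⟨g', f', hf'mem, hdiv⟩ := IsFractionRing.div_surjective
    (A := MvPolynomial (Fin m) k ⧸ MvPolynomial.vanishingIdeal k V) h
  obtain ⟨f, rfl⟩ := Ideal.Quotient.mk_surjective f'
  obtain ⟨g, rfl⟩ := Ideal.Quotient.mk_surjective g'
  have hmkf : Ideal.Quotient.mk (MvPolynomial.vanishingIdeal k V) f ≠ 0 :=
    nonZeroDivisors.ne_zero hf'mem
  have hφf : algebraMap (MvPolynomial (Fin m) k ⧸ MvPolynomial.vanishingIdeal k V)
      (FractionRing (MvPolynomial (Fin m) k ⧸ MvPolynomial.vanishingIdeal k V))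
      (Ideal.Quotient.mk (MvPolynomial.vanishingIdeal k V) f) ≠ 0 :=
    (map_ne_zero_iff _ (IsFractionRing.injective _ _)).mpr hmkf
  have hfg : h * algebraMap (MvPolynomial (Fin m) k ⧸ MvPolynomial.vanishingIdeal k V)
      (FractionRing (MvPolynomial (Fin m) k ⧸ MvPolynomial.vanishingIdeal k V))
      (Ideal.Quotient.mk (MvPolynomial.vanishingIdeal k V) f)
      = algebraMap (MvPolynomial (Fin m) k ⧸ MvPolynomial.vanishingIdeal k V)
      (FractionRing (MvPolynomial (Fin m) k ⧸ MvPolynomial.vanishingIdeal k V))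
      (Ideal.Quotient.mk (MvPolynomial.vanishingIdeal k V) g) := by
    rw [← hdiv]
    exact div_mul_cancel₀ _ hφf
  have hQf : clearQ P f g P.natDegree * f ∈ MvPolynomial.vanishingIdeal k V := by
    rw [MvPolynomial.mem_vanishingIdeal_iff]
    intro x hx
    rw [map_mul]
    change MvPolynomial.eval x _ * MvPolynomial.eval x _ = 0
    by_cases hfx : MvPolynomial.eval x f = 0
    · rw [hfx, mul_zero]
    · have ht : (MvPolynomial.eval x g / MvPolynomial.eval x f) * MvPolynomial.eval x f
          = MvPolynomial.eval x g := div_mul_cancel₀ _ hfx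
      have hz := hvan (x, MvPolynomial.eval x g / MvPolynomial.eval x f) ⟨hx, f, g, hfx, hfg, ht⟩
      have h3 := map_clearQ (MvPolynomial.eval x) P f g (Nat.lt_succ_self _) _ ht
      unfold evXT at hz
      rw [h3, hz, zero_mul, zero_mul]
  have h6 : Ideal.Quotient.mk (MvPolynomial.vanishingIdeal k V) (clearQ P f g P.natDegree)
      * Ideal.Quotient.mk (MvPolynomial.vanishingIdeal k V) f = 0 := by
    rw [← map_mul, Ideal.Quotient.eq_zero_iff_mem]
    exact hQf
  have h7 := (mul_eq_zero.mp h6).resolve_right hmkf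
  have h8 : ((algebraMap (MvPolynomial (Fin m) k ⧸ MvPolynomial.vanishingIdeal k V)
      (FractionRing (MvPolynomial (Fin m) k ⧸ MvPolynomial.vanishingIdeal k V))).comp
        (Ideal.Quotient.mk (MvPolynomial.vanishingIdeal k V)))
      (clearQ P f g P.natDegree) = 0 := by
    rw [RingHom.comp_apply, h7, map_zero]
  rw [map_clearQ _ P f g (Nat.lt_succ_self _) h hfg] at h8
  exact (mul_eq_zero.mp h8).resolve_right (pow_ne_zero _ hφf)

set_option maxHeartbeats 2000000 in
set_option synthInstance.maxHeartbeats 400000 in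
/-- Proposition 2.2: let `k` be an algebraically closed field of
characteristic 0, `V ⊆ k^m` an irreducible affine variety with coordinate ring
`A = k[X]/I(V)`, and `h` an element of the integral closure of `A` in its fraction field.
Then `h` is weakly subintegral over `A` iff there is a polynomial `F ∈ k[X_1,…,X_m,T]`,
monic in `T`, with `Γ_h ⊆ p^{-1}(V) ∩ ZZ(F)`. -/
theorem weaklySubintegral_iff_graph_in_zzSet {k : Type*} [Field k] [IsAlgClosed k]
    [CharZero k] {m : ℕ} (V : Set (Fin m → k))
    (hValg : V = MvPolynomial.zeroLocus k (MvPolynomial.vanishingIdeal k V))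
    [hVirr : (MvPolynomial.vanishingIdeal k V).IsPrime]
    (h : FractionRing (MvPolynomial (Fin m) k ⧸ MvPolynomial.vanishingIdeal k V))
    (hint : h ∈ integralClosure (MvPolynomial (Fin m) k ⧸ MvPolynomial.vanishingIdeal k V)
      (FractionRing (MvPolynomial (Fin m) k ⧸ MvPolynomial.vanishingIdeal k V))) :
    WSubOver (Set.range (algebraMap
        (MvPolynomial (Fin m) k ⧸ MvPolynomial.vanishingIdeal k V)
        (FractionRing (MvPolynomial (Fin m) k ⧸ MvPolynomial.vanishingIdeal k V)))) h ↔
      ∃ F : Polynomial (MvPolynomial (Fin m) k), F.Monic ∧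
        graphSet V h ⊆ {p : (Fin m → k) × k | p.1 ∈ V} ∩ ZZset F := by
  classical
  have hchar : ∀ n : ℕ, n ≠ 0 →
      ((n : ℕ) : FractionRing (MvPolynomial (Fin m) k ⧸ MvPolynomial.vanishingIdeal k V)) ≠ 0 := by
    intro n hn
    rw [← map_natCast (algebraMap (MvPolynomial (Fin m) k ⧸ MvPolynomial.vanishingIdeal k V)
        (FractionRing (MvPolynomial (Fin m) k ⧸ MvPolynomial.vanishingIdeal k V))) n,
      map_ne_zero_iff _ (IsFractionRing.injective _ _),
      ← map_natCast (algebraMap k (MvPolynomial (Fin m) k ⧸ MvPolynomial.vanishingIdeal k V)) n,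
      map_ne_zero_iff _ (algebraMap k
        (MvPolynomial (Fin m) k ⧸ MvPolynomial.vanishingIdeal k V)).injective]
    exact Nat.cast_ne_zero.mpr hn
  constructor
  · rintro ⟨q, a, haR, heq⟩
    have hlift : ∀ i, ∃ r : MvPolynomial (Fin m) k,
        algebraMap (MvPolynomial (Fin m) k ⧸ MvPolynomial.vanishingIdeal k V)
          (FractionRing (MvPolynomial (Fin m) k ⧸ MvPolynomial.vanishingIdeal k V))
          (Ideal.Quotient.mk (MvPolynomial.vanishingIdeal k V) r) = a i := by
      intro i
      obtain ⟨u, hu⟩ := haR i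
      obtain ⟨r, hr⟩ := Ideal.Quotient.mk_surjective u
      exact ⟨r, by rw [hr]; exact hu⟩
    choose aa haa using hlift
    set a' : ℕ → FractionRing (MvPolynomial (Fin m) k ⧸ MvPolynomial.vanishingIdeal k V) :=
      fun i => if i = 0 then 1 else a i with ha'
    set F : Polynomial (MvPolynomial (Fin m) k) :=
      X ^ (2 * q + 1) + ∑ i ∈ Finset.Icc 1 (2 * q + 1),
        C ((((2 * q + 1).choose i : ℕ) : MvPolynomial (Fin m) k) * aa i) * X ^ (2 * q + 1 - i)
      with hF
    have hdegsum : (∑ i ∈ Finset.Icc 1 (2 * q + 1),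
        C ((((2 * q + 1).choose i : ℕ) : MvPolynomial (Fin m) k) * aa i)
          * X ^ (2 * q + 1 - i)).degree < ((2 * q + 1 : ℕ) : WithBot ℕ) := by
      refine lt_of_le_of_lt (Polynomial.degree_sum_le _ _) ?_
      rw [Finset.sup_lt_iff (by exact_mod_cast WithBot.bot_lt_coe _)]
      intro i hi
      rw [Finset.mem_Icc] at hi
      refine lt_of_le_of_lt (Polynomial.degree_C_mul_X_pow_le _ _) ?_
      have hlt2 : (2 * q + 1 - i) < 2 * q + 1 := by omega
      exact_mod_cast hlt2
    have hFdeg : F.natDegree = 2 * q + 1 := by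
      apply Polynomial.natDegree_eq_of_degree_eq_some
      rw [hF, Polynomial.degree_add_eq_left_of_degree_lt, Polynomial.degree_X_pow]
      rw [Polynomial.degree_X_pow]
      exact hdegsum
    have hFm : F.Monic := Polynomial.monic_X_pow_add hdegsum
    have hFK : (F.map (Ideal.Quotient.mk (MvPolynomial.vanishingIdeal k V))).map
        (algebraMap (MvPolynomial (Fin m) k ⧸ MvPolynomial.vanishingIdeal k V)
          (FractionRing (MvPolynomial (Fin m) k ⧸ MvPolynomial.vanishingIdeal k V)))
        = GnPoly a' (2 * q + 1) := by
      rw [Polynomial.map_map, hF]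
      unfold GnPoly
      rw [range_succ_eq_insert, Finset.sum_insert (by simp)]
      rw [Polynomial.map_add, Polynomial.map_pow, Polynomial.map_X, Polynomial.map_sum]
      congr 1
      · simp [ha']
      · refine Finset.sum_congr rfl fun i hi => ?_
        rw [Finset.mem_Icc] at hi
        rw [Polynomial.map_mul, Polynomial.map_pow, Polynomial.map_X, Polynomial.map_C,
          map_mul, map_natCast, RingHom.comp_apply, haa i]
        simp only [ha', if_neg (show ¬ i = 0 by omega)]
    refine ⟨F, hFm, ?_⟩
    rintro ⟨x, t⟩ hp
    refine ⟨hp.1, ?_⟩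
    intro j hj
    rw [hFdeg] at hj
    have hj' : j ≤ q := by omega
    refine graph_vanish_of_eval V h (derivative^[j] F) ?_ (x, t) hp
    have hcomm : ((derivative^[j] F).map (Ideal.Quotient.mk (MvPolynomial.vanishingIdeal k V))).map
        (algebraMap (MvPolynomial (Fin m) k ⧸ MvPolynomial.vanishingIdeal k V)
          (FractionRing (MvPolynomial (Fin m) k ⧸ MvPolynomial.vanishingIdeal k V)))
        = derivative^[j] ((F.map (Ideal.Quotient.mk (MvPolynomial.vanishingIdeal k V))).map
          (algebraMap (MvPolynomial (Fin m) k ⧸ MvPolynomial.vanishingIdeal k V)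
            (FractionRing (MvPolynomial (Fin m) k ⧸ MvPolynomial.vanishingIdeal k V)))) := by
      rw [← Polynomial.iterate_derivative_map, ← Polynomial.iterate_derivative_map]
    rw [hcomm, hFK, iterate_derivative_GnPoly a' (2 * q + 1) j (by omega),
      Polynomial.eval_mul, Polynomial.eval_C,
      eval_GnPoly a' (by simp [ha']) h (2 * q + 1 - j)]
    have hsum : (∑ i ∈ Finset.Icc 1 (2 * q + 1 - j),
        (((2 * q + 1 - j).choose i : ℕ) :
          FractionRing (MvPolynomial (Fin m) k ⧸ MvPolynomial.vanishingIdeal k V))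
          * a' i * h ^ (2 * q + 1 - j - i))
        = ∑ i ∈ Finset.Icc 1 (2 * q + 1 - j),
        (((2 * q + 1 - j).choose i : ℕ) :
          FractionRing (MvPolynomial (Fin m) k ⧸ MvPolynomial.vanishingIdeal k V))
          * a i * h ^ (2 * q + 1 - j - i) := by
      refine Finset.sum_congr rfl fun i hi => ?_
      rw [Finset.mem_Icc] at hi
      simp only [ha', if_neg (show ¬ i = 0 by omega)]
    rw [hsum, heq (2 * q + 1 - j) (by omega) (by omega), mul_zero]
  · rintro ⟨F, hFm, hsub⟩
    have hvanF : ∀ j ≤ F.natDegree / 2, Polynomial.eval h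
        (derivative^[j] ((F.map (Ideal.Quotient.mk (MvPolynomial.vanishingIdeal k V))).map
          (algebraMap (MvPolynomial (Fin m) k ⧸ MvPolynomial.vanishingIdeal k V)
            (FractionRing (MvPolynomial (Fin m) k ⧸ MvPolynomial.vanishingIdeal k V))))) = 0 := by
      intro j hj
      have hev := eval_of_graph_vanish V h (derivative^[j] F)
        (fun p hp => (hsub hp).2 j hj)
      rwa [← Polynomial.iterate_derivative_map, ← Polynomial.iterate_derivative_map] at hev
    set FK := (F.map (Ideal.Quotient.mk (MvPolynomial.vanishingIdeal k V))).map
      (algebraMap (MvPolynomial (Fin m) k ⧸ MvPolynomial.vanishingIdeal k V)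
        (FractionRing (MvPolynomial (Fin m) k ⧸ MvPolynomial.vanishingIdeal k V))) with hFKdef
    have hFKm : FK.Monic := (hFm.map _).map _
    have hFKdeg : FK.natDegree = F.natDegree := by
      rw [hFKdef, (hFm.map _).natDegree_map, hFm.natDegree_map]
    have hmulR : ∀ x ∈ Set.range (algebraMap
        (MvPolynomial (Fin m) k ⧸ MvPolynomial.vanishingIdeal k V)
        (FractionRing (MvPolynomial (Fin m) k ⧸ MvPolynomial.vanishingIdeal k V))),
        ∀ y ∈ Set.range (algebraMap
        (MvPolynomial (Fin m) k ⧸ MvPolynomial.vanishingIdeal k V)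
        (FractionRing (MvPolynomial (Fin m) k ⧸ MvPolynomial.vanishingIdeal k V))),
        x * y ∈ Set.range (algebraMap
        (MvPolynomial (Fin m) k ⧸ MvPolynomial.vanishingIdeal k V)
        (FractionRing (MvPolynomial (Fin m) k ⧸ MvPolynomial.vanishingIdeal k V))) := by
      rintro x ⟨u, rfl⟩ y ⟨v, rfl⟩
      exact ⟨u * v, map_mul _ u v⟩
    have hinv : ∀ n : ℕ, n ≠ 0 →
        ((n : ℕ) : FractionRing (MvPolynomial (Fin m) k ⧸ MvPolynomial.vanishingIdeal k V))⁻¹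
          ∈ Set.range (algebraMap
          (MvPolynomial (Fin m) k ⧸ MvPolynomial.vanishingIdeal k V)
          (FractionRing (MvPolynomial (Fin m) k ⧸ MvPolynomial.vanishingIdeal k V))) := by
      intro n hn
      refine ⟨algebraMap k (MvPolynomial (Fin m) k ⧸ MvPolynomial.vanishingIdeal k V)
        ((n : k))⁻¹, ?_⟩
      apply eq_inv_of_mul_eq_one_left
      rw [← map_natCast (algebraMap (MvPolynomial (Fin m) k ⧸ MvPolynomial.vanishingIdeal k V)
          (FractionRing (MvPolynomial (Fin m) k ⧸ MvPolynomial.vanishingIdeal k V))) n,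
        ← map_natCast (algebraMap k (MvPolynomial (Fin m) k ⧸ MvPolynomial.vanishingIdeal k V)) n,
        ← map_mul, ← map_mul, inv_mul_cancel₀ (Nat.cast_ne_zero.mpr hn), map_one, map_one]
    have hzeroR : (0 : FractionRing (MvPolynomial (Fin m) k ⧸ MvPolynomial.vanishingIdeal k V))
        ∈ Set.range (algebraMap
        (MvPolynomial (Fin m) k ⧸ MvPolynomial.vanishingIdeal k V)
        (FractionRing (MvPolynomial (Fin m) k ⧸ MvPolynomial.vanishingIdeal k V))) :=
      ⟨0, map_zero _⟩
    have hcoeffFK : ∀ i, FK.coeff i ∈ Set.range (algebraMap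
        (MvPolynomial (Fin m) k ⧸ MvPolynomial.vanishingIdeal k V)
        (FractionRing (MvPolynomial (Fin m) k ⧸ MvPolynomial.vanishingIdeal k V))) := by
      intro i
      exact ⟨(F.map (Ideal.Quotient.mk (MvPolynomial.vanishingIdeal k V))).coeff i,
        (Polynomial.coeff_map _ _).symm⟩
    rcases Nat.even_or_odd F.natDegree with he | ho
    · obtain ⟨c, hc⟩ := he
      refine wsub_of_poly _ hzeroR hmulR hinv hchar h (F.natDegree / 2) (X * FK)
        (Polynomial.monic_X.mul hFKm) ?_ ?_ ?_
      · rw [Polynomial.natDegree_mul Polynomial.X_ne_zero hFKm.ne_zero,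
          Polynomial.natDegree_X, hFKdeg]
        omega
      · intro i
        cases i with
        | zero =>
          rw [Polynomial.mul_coeff_zero, Polynomial.coeff_X_zero, zero_mul]
          exact hzeroR
        | succ i =>
          rw [Polynomial.coeff_X_mul]
          exact hcoeffFK i
      · intro j hj
        cases j with
        | zero =>
          simp only [Function.iterate_zero, id_eq, Polynomial.eval_mul, Polynomial.eval_X]
          have h0 := hvanF 0 (Nat.zero_le _)
          simp only [Function.iterate_zero, id_eq] at h0
          rw [h0, mul_zero]
        | succ j =>
          rw [iterate_derivative_X_mul, Polynomial.eval_add, Polynomial.eval_mul,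
            Polynomial.eval_mul, Polynomial.eval_C, Polynomial.eval_X,
            hvanF j (by omega), hvanF (j + 1) (by omega), mul_zero, mul_zero, add_zero]
    · obtain ⟨c, hc⟩ := ho
      refine wsub_of_poly _ hzeroR hmulR hinv hchar h (F.natDegree / 2) FK hFKm
        (by rw [hFKdeg]; omega) hcoeffFK (fun j hj => hvanF j hj)
end

section
/- Let (A,m) be a Noetherian local ring, I = (a_1,…,a_ℓ) an ideal of A, a ∈ A, R = A[It] the Rees algebra, and let R ⊆ S be an integral extension of ℕ-graded rings (S is ℕ-graded, R_n ⊆ S_n for all n, and S is integral over R). Then the image of a lies in I·S_(q) for every q ∈ Proj(S) with q ∩ A = m if and only if the image of a lies in I·S_(a_i t) for each i = 1,…,ℓ. -/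
open Polynomial

set_option synthInstance.maxHeartbeats 1000000
set_option maxHeartbeats 1000000

section ReesAuxSection

variable {A : Type*} [CommRing A] {I : Ideal A}


theorem ReesAux.coeff_mem (r : ↥(reesAlgebra I)) (d : ℕ) : (r : A[X]).coeff d ∈ I ^ d := r.2 d

theorem ReesAux.prod_mem_pow {β : Type*} (s : Finset β) (f : β → A) (h : ∀ b ∈ s, f b ∈ I) :
    (∏ b ∈ s, f b) ∈ I ^ s.card := by
  classical
  induction s using Finset.cons_induction with
  | empty => simp [Ideal.one_eq_top]
  | cons b s hb ih =>
      rw [Finset.prod_cons, Finset.card_cons, pow_succ']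
      exact Ideal.mul_mem_mul (h b (Finset.mem_cons_self b s)) (ih fun x hx => h x (Finset.mem_cons_of_mem hx))

theorem ReesAux.coeff_map_mem (J : Ideal A) (w : ↥(reesAlgebra I))
    (hw : w ∈ Ideal.map (algebraMap A ↥(reesAlgebra I)) J) (d : ℕ) :
    (w : A[X]).coeff d ∈ J * I ^ d := by
  have hw' : w ∈ Ideal.span ((algebraMap A ↥(reesAlgebra I)) '' J) := hw
  refine Submodule.span_induction
    (p := fun (v : ↥(reesAlgebra I)) _ => ∀ d : ℕ, ((v : A[X]).coeff d ∈ J * I ^ d)) ?_ ?_ ?_ ?_ hw' d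
  · rintro x ⟨u, hu, rfl⟩ d
    have hx : ((algebraMap A ↥(reesAlgebra I) u : ↥(reesAlgebra I)) : A[X]) = C u := rfl
    rw [hx, coeff_C]
    split_ifs with hd
    · subst hd
      simpa [Ideal.one_eq_top] using Ideal.mul_mem_mul hu (Submodule.mem_top (R := A) (x := (1:A)))
    · exact Ideal.zero_mem _
  · intro d; simp
  · intro x y _ _ ihx ihy d
    have hco : ((x + y : ↥(reesAlgebra I)) : A[X]).coeff d = (x : A[X]).coeff d + (y : A[X]).coeff d := by
      push_cast; simp
    rw [hco]; exact Ideal.add_mem _ (ihx d) (ihy d)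
  · intro r x _ ihx d
    have hcoe : (((r • x : ↥(reesAlgebra I))) : A[X]) = (r : A[X]) * (x : A[X]) := by
      rw [smul_eq_mul]; rfl
    rw [hcoe, coeff_mul]
    refine Ideal.sum_mem _ ?_
    rintro ⟨u, v⟩ huv
    have h3 := Ideal.mul_mem_mul (r.2 u) (ihx v)
    have heq : I ^ u * (J * I ^ v) = J * I ^ (u + v) := by rw [pow_add]; ring
    rw [heq] at h3
    rwa [Finset.HasAntidiagonal.mem_antidiagonal.mp huv] at h3


variable {S : Type*} [CommRing S] [Algebra A S] (𝒜 : ℕ → Submodule A S) [GradedAlgebra 𝒜]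
variable (Φ : ↥(reesAlgebra I) →ₐ[A] S)


theorem ReesAux.decompose_phi
    (hΦgr : ∀ (n : ℕ) (x : A) (hx : x ∈ I ^ n),
      Φ ⟨Polynomial.monomial n x, reesAlgebra.monomial_mem.mpr hx⟩ ∈ 𝒜 n)
    (r : ↥(reesAlgebra I)) (d : ℕ) :
    (DirectSum.decompose 𝒜 (Φ r) d : S) =
      Φ ⟨monomial d ((r : A[X]).coeff d), reesAlgebra.monomial_mem.mpr (r.2 d)⟩ := by
  classical
  have hr : r = ∑ k ∈ (r : A[X]).support,
      (⟨monomial k ((r : A[X]).coeff k), reesAlgebra.monomial_mem.mpr (r.2 k)⟩ : ↥(reesAlgebra I)) := by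
    apply Subtype.ext
    rw [AddSubmonoidClass.coe_finset_sum]
    exact (r : A[X]).as_sum_support
  conv_lhs => rw [hr, map_sum, DirectSum.decompose_sum]
  rw [DFinsupp.finset_sum_apply, AddSubmonoidClass.coe_finset_sum]
  have hterm : ∀ k ∈ (r : A[X]).support,
      ((DirectSum.decompose 𝒜 (Φ ⟨monomial k ((r : A[X]).coeff k),
          reesAlgebra.monomial_mem.mpr (r.2 k)⟩) d : S))
        = if k = d then Φ ⟨monomial k ((r : A[X]).coeff k), reesAlgebra.monomial_mem.mpr (r.2 k)⟩ else 0 := by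
    intro k _
    rw [DirectSum.decompose_of_mem 𝒜 (hΦgr k _ (r.2 k)), DirectSum.coe_of_apply]
    split_ifs <;> rfl
  rw [Finset.sum_congr rfl hterm, Finset.sum_ite_eq' ((r : A[X]).support) d]
  split_ifs with hd
  · rfl
  · rw [notMem_support_iff] at hd
    have : (⟨monomial d ((r : A[X]).coeff d), reesAlgebra.monomial_mem.mpr (r.2 d)⟩ : ↥(reesAlgebra I)) = 0 := by
      apply Subtype.ext; simp [hd]
    rw [this, map_zero]


variable {ℓ : ℕ} {g : Fin ℓ → A}


/-- every monomial of positive degree maps into the ideal generated by the `g j t`. -/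
theorem ReesAux.mono_mem_span (hI : I = Ideal.span (Set.range g)) (hg : ∀ j, g j ∈ I)
    (d : ℕ) (hd : 0 < d) (c : A) (hc : c ∈ I ^ d) :
    Φ ⟨monomial d c, reesAlgebra.monomial_mem.mpr hc⟩ ∈
      Ideal.span (Set.range fun j : Fin ℓ =>
        Φ ⟨monomial 1 (g j), reesAlgebra.monomial_mem.mpr (by simpa using hg j)⟩) := by
  -- base case d = 1 first
  have base : ∀ (c : A) (hc1 : c ∈ I ^ 1),
      Φ ⟨monomial 1 c, reesAlgebra.monomial_mem.mpr hc1⟩ ∈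
        Ideal.span (Set.range fun j : Fin ℓ =>
          Φ ⟨monomial 1 (g j), reesAlgebra.monomial_mem.mpr (by simpa using hg j)⟩) := by
    intro c hc1
    have hc' : c ∈ Ideal.span (Set.range g) := by rw [← hI]; simpa using hc1
    refine Submodule.span_induction
      (p := fun (c : A) _ => ∀ hc1 : c ∈ I ^ 1,
        Φ ⟨monomial 1 c, reesAlgebra.monomial_mem.mpr hc1⟩ ∈
          Ideal.span (Set.range fun j : Fin ℓ =>
            Φ ⟨monomial 1 (g j), reesAlgebra.monomial_mem.mpr (by simpa using hg j)⟩))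
      ?_ ?_ ?_ ?_ hc' hc1
    · rintro x ⟨j, rfl⟩ hc1
      exact Ideal.subset_span ⟨j, rfl⟩
    · intro hc1
      have h0 : (⟨monomial 1 (0:A), reesAlgebra.monomial_mem.mpr hc1⟩ : ↥(reesAlgebra I)) = 0 :=
        Subtype.ext (by simp)
      rw [h0, map_zero]; exact Ideal.zero_mem _
    · intro x y hxs hys ihx ihy hc1
      have hx1 : x ∈ I ^ 1 := by rw [pow_one, hI]; exact hxs
      have hy1 : y ∈ I ^ 1 := by rw [pow_one, hI]; exact hys
      have hsplit : (⟨monomial 1 (x + y), reesAlgebra.monomial_mem.mpr hc1⟩ : ↥(reesAlgebra I)) =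
          ⟨monomial 1 x, reesAlgebra.monomial_mem.mpr hx1⟩ +
            ⟨monomial 1 y, reesAlgebra.monomial_mem.mpr hy1⟩ :=
        Subtype.ext (by simp [map_add])
      rw [hsplit, map_add]
      exact Ideal.add_mem _ (ihx hx1) (ihy hy1)
    · intro α x hxs ihx hc1
      have hx1 : x ∈ I ^ 1 := by rw [pow_one, hI]; exact hxs
      have hsplit : (⟨monomial 1 (α • x), reesAlgebra.monomial_mem.mpr hc1⟩ : ↥(reesAlgebra I)) =
          α • ⟨monomial 1 x, reesAlgebra.monomial_mem.mpr hx1⟩ :=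
        Subtype.ext (by simp [Polynomial.smul_monomial])
      rw [hsplit, map_smul, Algebra.smul_def]
      exact Ideal.mul_mem_left _ _ (ihx hx1)
  -- now induct on d
  induction d with
  | zero => omega
  | succ d ih =>
      rcases Nat.eq_zero_or_pos d with hd0 | hdpos
      · subst hd0; exact base c hc
      · -- c ∈ I ^ (d+1) = I ^ d * I
        have hc' : c ∈ I ^ d * I := by rwa [← pow_succ]
        refine Submodule.mul_induction_on'
          (C := fun (c : A) _ => ∀ hc1 : c ∈ I ^ (d+1),
            Φ ⟨monomial (d+1) c, reesAlgebra.monomial_mem.mpr hc1⟩ ∈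
              Ideal.span (Set.range fun j : Fin ℓ =>
                Φ ⟨monomial 1 (g j), reesAlgebra.monomial_mem.mpr (by simpa using hg j)⟩))
          ?_ ?_ hc' hc
        · intro x hx y hy hc1
          have hsplit : (⟨monomial (d+1) (x * y), reesAlgebra.monomial_mem.mpr hc1⟩ : ↥(reesAlgebra I)) =
              ⟨monomial d x, reesAlgebra.monomial_mem.mpr hx⟩ *
                ⟨monomial 1 y, reesAlgebra.monomial_mem.mpr (by simpa using hy)⟩ :=
            Subtype.ext (by simp [monomial_mul_monomial])
          rw [hsplit, map_mul]
          exact Ideal.mul_mem_left _ _ (base y (by simpa using hy))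
        · intro x hxm y hym ihx ihy hc1
          have hx1 : x ∈ I ^ (d+1) := by rw [pow_succ]; exact hxm
          have hy1 : y ∈ I ^ (d+1) := by rw [pow_succ]; exact hym
          have hsplit : (⟨monomial (d+1) (x + y), reesAlgebra.monomial_mem.mpr hc1⟩ : ↥(reesAlgebra I)) =
              ⟨monomial (d+1) x, reesAlgebra.monomial_mem.mpr hx1⟩ +
                ⟨monomial (d+1) y, reesAlgebra.monomial_mem.mpr hy1⟩ :=
            Subtype.ext (by simp [map_add])
          rw [hsplit, map_add]
          exact Ideal.add_mem _ (ihx hx1) (ihy hy1)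

/-- If all the degree-one generators `g j t` lie in a homogeneous prime `q`,
then `q` contains every homogeneous element of positive degree. -/
theorem ReesAux.posdeg_mem (hI : I = Ideal.span (Set.range g)) (hg : ∀ j, g j ∈ I)
    (hΦgr : ∀ (n : ℕ) (x : A) (hx : x ∈ I ^ n),
      Φ ⟨Polynomial.monomial n x, reesAlgebra.monomial_mem.mpr hx⟩ ∈ 𝒜 n)
    (hSint : ∀ s : S, ∃ p : Polynomial ↥(reesAlgebra I), p.Monic ∧
      Polynomial.eval₂ (Φ : ↥(reesAlgebra I) →+* S) s p = 0)
    {q : Ideal S} (hqprime : q.IsPrime)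
    (hall : ∀ j : Fin ℓ,
      Φ ⟨monomial 1 (g j), reesAlgebra.monomial_mem.mpr (by simpa using hg j)⟩ ∈ q)
    {n : ℕ} (hn : 0 < n) {z : S} (hz : z ∈ 𝒜 n) : z ∈ q := by
  classical
  obtain ⟨p, hmonic, heval⟩ := hSint z
  set e := p.natDegree with he
  rcases Nat.eq_zero_or_pos e with he0 | hepos
  · -- p = 1, so 1 = 0 in S, q = ⊤, contradiction
    exfalso
    have h1 : p = 1 := by
      have := Polynomial.eq_one_of_monic_natDegree_zero hmonic he0
      exact this
    rw [h1] at heval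
    simp at heval
    have h1q : (1 : S) ∈ q := by rw [heval]; exact q.zero_mem
    exact hqprime.ne_top ((Ideal.eq_top_iff_one q).mpr h1q)
  · -- main case
    have hspan_le : Ideal.span (Set.range fun j : Fin ℓ =>
        Φ ⟨monomial 1 (g j), reesAlgebra.monomial_mem.mpr (by simpa using hg j)⟩) ≤ q := by
      rw [Ideal.span_le]; rintro x ⟨j, rfl⟩; exact hall j
    have hze : z ^ e ∈ 𝒜 (e * n) := by
      have := SetLike.pow_mem_graded e hz
      simpa [smul_eq_mul] using this
    have heval' : z ^ e = - ∑ j ∈ Finset.range e, Φ (p.coeff j) * z ^ j := by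
      rw [Polynomial.eval₂_eq_sum_range] at heval
      rw [Finset.sum_range_succ] at heval
      simp only [RingHom.coe_coe] at heval
      have hlead : p.coeff e = 1 := hmonic.coeff_natDegree
      rw [hlead] at heval
      simp only [map_one, one_mul] at heval
      exact eq_neg_of_add_eq_zero_right heval
    have hsub : z ^ e ∈ q := by
      have hterm : ∀ j ∈ Finset.range e,
          (GradedRing.proj 𝒜 (e * n)) (Φ (p.coeff j) * z ^ j) ∈ q := by
        intro j hj
        have hjlt : j < e := Finset.mem_range.1 hj
        have hzj : z ^ j ∈ 𝒜 (j * n) := by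
          simpa [smul_eq_mul] using SetLike.pow_mem_graded j hz
        rw [GradedRing.proj_apply,
          DirectSum.coe_decompose_mul_of_right_mem_of_le 𝒜 hzj
            (Nat.mul_le_mul_right n (le_of_lt hjlt))]
        have hdeg : e * n - j * n = (e - j) * n := (Nat.sub_mul e j n).symm
        have hdc := ReesAux.decompose_phi 𝒜 Φ hΦgr (p.coeff j) (e * n - j * n)
        rw [hdc]
        refine Ideal.mul_mem_right _ _ (hspan_le ?_)
        have hdpos : 0 < e * n - j * n := by
          rw [hdeg]
          exact Nat.mul_pos (by omega) hn
        -- rewrite the degree to use mono_mem_span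
        exact ReesAux.mono_mem_span Φ hI hg _ hdpos _ ((p.coeff j).2 (e * n - j * n))
      have hproj : z ^ e = (GradedRing.proj 𝒜 (e * n)) (z ^ e) := by
        rw [GradedRing.proj_apply, DirectSum.decompose_of_mem_same 𝒜 hze]
      rw [hproj, heval', map_neg, map_sum]
      exact neg_mem (Ideal.sum_mem _ hterm)
    exact hqprime.mem_of_pow_mem e hsub


theorem ReesAux.pow_eq_span_prods (hI : I = Ideal.span (Set.range g)) (k : ℕ) :
    I ^ k = Ideal.span (Set.range fun σ : Fin k → Fin ℓ => ∏ t, g (σ t)) := by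
  induction k with
  | zero =>
      simp only [pow_zero, Ideal.one_eq_top]
      symm
      rw [Ideal.eq_top_iff_one]
      exact Ideal.subset_span ⟨Fin.elim0, by simp⟩
  | succ k ih =>
      rw [pow_succ, ih, hI, Ideal.span_mul_span']
      apply le_antisymm
      · rw [Ideal.span_le]
        rintro x hx
        obtain ⟨x1, hx1, x2, hx2, rfl⟩ := Set.mem_mul.1 hx
        obtain ⟨σ, rfl⟩ := hx1
        obtain ⟨j, rfl⟩ := hx2
        refine Ideal.subset_span ⟨(Fin.snoc σ j : Fin (k+1) → Fin ℓ), ?_⟩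
        show (∏ t : Fin (k+1), g ((Fin.snoc σ j : Fin (k+1) → Fin ℓ) t)) =
          (∏ t : Fin k, g (σ t)) * g j
        rw [Fin.prod_univ_castSucc]
        simp
      · rw [Ideal.span_le]
        rintro x ⟨σ, rfl⟩
        show (∏ t : Fin (k+1), g (σ t)) ∈ _
        rw [Fin.prod_univ_castSucc]
        exact Ideal.subset_span
          (Set.mul_mem_mul ⟨fun t => σ t.castSucc, rfl⟩ ⟨σ (Fin.last k), rfl⟩)

theorem ReesAux.witness [IsNoetherianRing A] [IsLocalRing A]
    (hI : I = Ideal.span (Set.range g)) (hg : ∀ j, g j ∈ I)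
    (hΦgr : ∀ (n : ℕ) (x : A) (hx : x ∈ I ^ n),
      Φ ⟨Polynomial.monomial n x, reesAlgebra.monomial_mem.mpr hx⟩ ∈ 𝒜 n)
    (i : Fin ℓ) (P : Ideal S) (hP : P.IsPrime)
    (hfP : Φ ⟨monomial 1 (g i), reesAlgebra.monomial_mem.mpr (by simpa using hg i)⟩ ∉ P) :
    ∃ (d : ℕ) (c : A) (_ : 0 < d) (hc : c ∈ I ^ d),
      (⟨monomial d c, reesAlgebra.monomial_mem.mpr hc⟩ : ↥(reesAlgebra I)) ∉
        (Ideal.comap (Φ : ↥(reesAlgebra I) →+* S) (P.homogeneousCore 𝒜).toIdeal ⊔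
          Ideal.map (algebraMap A ↥(reesAlgebra I)) (IsLocalRing.maximalIdeal A)).radical := by
  classical
  by_contra hcon
  push_neg at hcon
  set m : Ideal A := IsLocalRing.maximalIdeal A with hm
  set q₀ : Ideal S := (P.homogeneousCore 𝒜).toIdeal with hq₀
  set 𝔅 : Ideal ↥(reesAlgebra I) :=
    Ideal.comap (Φ : ↥(reesAlgebra I) →+* S) q₀ ⊔
      Ideal.map (algebraMap A ↥(reesAlgebra I)) m with h𝔅
  have hxj : ∀ j : Fin ℓ, ∃ n : ℕ,
      (⟨monomial 1 (g j), reesAlgebra.monomial_mem.mpr (by simpa using hg j)⟩ :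
        ↥(reesAlgebra I)) ^ n ∈ 𝔅 :=
    fun j => hcon 1 (g j) one_pos (by simpa using hg j)
  choose nf hnf using hxj
  set n : ℕ := (Finset.univ.sup nf) + 1 with hn
  have hn1 : 1 ≤ n := Nat.le_add_left 1 _
  have hxn : ∀ j : Fin ℓ,
      (⟨monomial 1 (g j), reesAlgebra.monomial_mem.mpr (by simpa using hg j)⟩ :
        ↥(reesAlgebra I)) ^ n ∈ 𝔅 := by
    intro j
    have hle : nf j ≤ n := le_trans (Finset.le_sup (Finset.mem_univ j)) (Nat.le_succ _)
    have hsplit : (⟨monomial 1 (g j), reesAlgebra.monomial_mem.mpr (by simpa using hg j)⟩ :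
        ↥(reesAlgebra I)) ^ n =
        (⟨monomial 1 (g j), reesAlgebra.monomial_mem.mpr (by simpa using hg j)⟩ :
          ↥(reesAlgebra I)) ^ (nf j) *
        (⟨monomial 1 (g j), reesAlgebra.monomial_mem.mpr (by simpa using hg j)⟩ :
          ↥(reesAlgebra I)) ^ (n - nf j) := by
      rw [← pow_add, Nat.add_sub_cancel' hle]
    rw [hsplit]
    exact Ideal.mul_mem_right _ _ (hnf j)
  set N : ℕ := ℓ * (n - 1) + 1 with hN
  have hnN : n ≤ N := by
    have h1 : 1 * (n - 1) ≤ ℓ * (n - 1) := Nat.mul_le_mul_right _ i.pos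
    omega
  let J0 : Submodule A ↥(I ^ N) :=
    { carrier := { x : ↥(I ^ N) |
        Φ ⟨monomial N (x : A), reesAlgebra.monomial_mem.mpr x.2⟩ ∈ q₀ }
      add_mem' := by
        intro x y hx hy
        simp only [Set.mem_setOf_eq] at *
        have hsplit : (⟨monomial N ((x + y : ↥(I ^ N)) : A),
            reesAlgebra.monomial_mem.mpr (x + y).2⟩ : ↥(reesAlgebra I)) =
            ⟨monomial N (x : A), reesAlgebra.monomial_mem.mpr x.2⟩ +
              ⟨monomial N (y : A), reesAlgebra.monomial_mem.mpr y.2⟩ :=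
          Subtype.ext (by push_cast; simp [map_add])
        rw [hsplit, map_add]
        exact Ideal.add_mem _ hx hy
      zero_mem' := by
        simp only [Set.mem_setOf_eq]
        have h0 : (⟨monomial N ((0 : ↥(I ^ N)) : A),
            reesAlgebra.monomial_mem.mpr (0 : ↥(I ^ N)).2⟩ : ↥(reesAlgebra I)) = 0 :=
          Subtype.ext (by simp)
        rw [h0, map_zero]
        exact q₀.zero_mem
      smul_mem' := by
        intro α x hx
        simp only [Set.mem_setOf_eq] at *
        have hsplit : (⟨monomial N ((α • x : ↥(I ^ N)) : A),
            reesAlgebra.monomial_mem.mpr (α • x).2⟩ : ↥(reesAlgebra I)) =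
            α • ⟨monomial N (x : A), reesAlgebra.monomial_mem.mpr x.2⟩ :=
          Subtype.ext (by push_cast; simp [Polynomial.smul_monomial])
        rw [hsplit, map_smul, Algebra.smul_def]
        exact Ideal.mul_mem_left _ _ hx }
  have key : ∀ x : ↥(I ^ N), x ∈ J0 ⊔ (m • (⊤ : Submodule A ↥(I ^ N))) := by
    rintro ⟨c, hc⟩
    have hc' : c ∈ Ideal.span (Set.range fun σ : Fin N → Fin ℓ => ∏ t, g (σ t)) := by
      rw [← ReesAux.pow_eq_span_prods hI N]; exact hc
    refine Submodule.span_induction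
      (p := fun c _ => ∀ hc0 : c ∈ I ^ N,
        (⟨c, hc0⟩ : ↥(I ^ N)) ∈ J0 ⊔ (m • (⊤ : Submodule A ↥(I ^ N))))
      ?_ ?_ ?_ ?_ hc' hc
    · rintro _ ⟨σ, rfl⟩ hc0
      obtain ⟨j, hj⟩ : ∃ j : Fin ℓ, n ≤ (Finset.univ.filter fun t => σ t = j).card := by
        by_contra hno
        push_neg at hno
        have h1 : (Finset.univ : Finset (Fin N)).card =
            ∑ j : Fin ℓ, (Finset.univ.filter fun t => σ t = j).card :=
          Finset.card_eq_sum_card_fiberwise fun x _ => Finset.mem_univ (σ x)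
        have h2 : ∑ j : Fin ℓ, (Finset.univ.filter fun t => σ t = j).card ≤ ℓ * (n - 1) := by
          calc ∑ j : Fin ℓ, (Finset.univ.filter fun t => σ t = j).card
              ≤ ∑ _j : Fin ℓ, (n - 1) := Finset.sum_le_sum fun j _ => by
                have := hno j; omega
            _ = ℓ * (n - 1) := by
                simp [Finset.sum_const, Finset.card_univ, mul_comm]
        rw [Finset.card_univ, Fintype.card_fin] at h1
        omega
      obtain ⟨T, hTsub, hTcard⟩ := Finset.exists_subset_card_eq hj
      have hTfib : ∀ t ∈ T, σ t = j := fun t ht => (Finset.mem_filter.1 (hTsub ht)).2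
      have hprodT : (∏ t ∈ T, g (σ t)) = g j ^ n := by
        rw [Finset.prod_congr rfl fun t ht => by rw [hTfib t ht], Finset.prod_const, hTcard]
      have hrest : (∏ t ∈ Tᶜ, g (σ t)) ∈ I ^ (N - n) := by
        have hcompl : Tᶜ.card = N - n := by
          rw [Finset.card_compl, hTcard, Fintype.card_fin]
        rw [← hcompl]
        exact ReesAux.prod_mem_pow Tᶜ _ fun t _ => hg (σ t)
      have hXmem : (⟨monomial N (∏ t, g (σ t)), reesAlgebra.monomial_mem.mpr hc0⟩ :
          ↥(reesAlgebra I)) ∈ 𝔅 := by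
        have heq : (⟨monomial N (∏ t, g (σ t)), reesAlgebra.monomial_mem.mpr hc0⟩ :
            ↥(reesAlgebra I)) =
            (⟨monomial 1 (g j), reesAlgebra.monomial_mem.mpr (by simpa using hg j)⟩ :
              ↥(reesAlgebra I)) ^ n *
              ⟨monomial (N - n) (∏ t ∈ Tᶜ, g (σ t)), reesAlgebra.monomial_mem.mpr hrest⟩ := by
          apply Subtype.ext
          push_cast
          rw [monomial_pow, monomial_mul_monomial]
          have hNeq : 1 * n + (N - n) = N := by omega
          rw [hNeq, ← hprodT, Finset.prod_mul_prod_compl]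
        rw [heq]
        exact Ideal.mul_mem_right _ _ (hxn j)
      obtain ⟨ρ, hρ, w, hw, hsum⟩ := Submodule.mem_sup.1 hXmem
      have hcsplit : (∏ t, g (σ t)) = ((ρ : A[X]).coeff N) + ((w : A[X]).coeff N) := by
        have h1 := congrArg (fun r : ↥(reesAlgebra I) => (r : A[X]).coeff N) hsum
        simp only at h1
        push_cast at h1
        simpa [Polynomial.coeff_monomial] using h1.symm
      have hρc : ((ρ : A[X]).coeff N) ∈ I ^ N := ρ.2 N
      have hwc : ((w : A[X]).coeff N) ∈ I ^ N := w.2 N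
      have hρJ : (⟨(ρ : A[X]).coeff N, hρc⟩ : ↥(I ^ N)) ∈ J0 := by
        show Φ ⟨monomial N ((ρ : A[X]).coeff N), reesAlgebra.monomial_mem.mpr (ρ.2 N)⟩ ∈ q₀
        rw [← ReesAux.decompose_phi 𝒜 Φ hΦgr ρ N]
        exact (P.homogeneousCore 𝒜).isHomogeneous N (Ideal.mem_comap.mp hρ)
      have hwm : (⟨(w : A[X]).coeff N, hwc⟩ : ↥(I ^ N)) ∈
          m • (⊤ : Submodule A ↥(I ^ N)) := by
        rw [Submodule.mem_smul_top_iff]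
        have h2 := ReesAux.coeff_map_mem m w hw N
        rwa [← Ideal.smul_eq_mul] at h2
      have hfinal : (⟨∏ t, g (σ t), hc0⟩ : ↥(I ^ N)) =
          ⟨(ρ : A[X]).coeff N, hρc⟩ + ⟨(w : A[X]).coeff N, hwc⟩ :=
        Subtype.ext (by push_cast; exact hcsplit)
      rw [hfinal]
      exact Submodule.add_mem _ (Submodule.mem_sup_left hρJ) (Submodule.mem_sup_right hwm)
    · intro hc0
      have h0 : (⟨(0 : A), hc0⟩ : ↥(I ^ N)) = 0 := rfl
      rw [h0]; exact Submodule.zero_mem _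
    · intro x y hxs hys ihx ihy hc0
      have hx0 : x ∈ I ^ N := by rw [ReesAux.pow_eq_span_prods hI N]; exact hxs
      have hy0 : y ∈ I ^ N := by rw [ReesAux.pow_eq_span_prods hI N]; exact hys
      have hxy : (⟨x + y, hc0⟩ : ↥(I ^ N)) = ⟨x, hx0⟩ + ⟨y, hy0⟩ := rfl
      rw [hxy]; exact Submodule.add_mem _ (ihx hx0) (ihy hy0)
    · intro α x hxs ihx hc0
      have hx0 : x ∈ I ^ N := by rw [ReesAux.pow_eq_span_prods hI N]; exact hxs
      have hax : (⟨α • x, hc0⟩ : ↥(I ^ N)) = α • ⟨x, hx0⟩ := rfl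
      rw [hax]; exact Submodule.smul_mem _ _ (ihx hx0)
  haveI hfin : Module.Finite A ↥(I ^ N) := Module.Finite.iff_fg.mpr (IsNoetherian.noetherian _)
  have hq : ∀ x : ↥(I ^ N), x ∈ J0 := by
    have htop : (⊤ : Submodule A (↥(I ^ N) ⧸ J0)) ≤ m • ⊤ := by
      rintro xq -
      obtain ⟨x, rfl⟩ := Submodule.Quotient.mk_surjective J0 xq
      obtain ⟨y, hy, z, hz, hsum⟩ := Submodule.mem_sup.1 (key x)
      rw [← hsum, Submodule.Quotient.mk_add,
        (Submodule.Quotient.mk_eq_zero J0).2 hy, zero_add]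
      have h1 : Submodule.Quotient.mk (p := J0) z ∈ Submodule.map J0.mkQ (m • ⊤) :=
        ⟨z, hz, rfl⟩
      rw [Submodule.map_smul''] at h1
      have h2 : (m • (Submodule.map J0.mkQ ⊤) : Submodule A (↥(I ^ N) ⧸ J0)) ≤ m • ⊤ :=
        smul_mono_right _ le_top
      exact h2 h1
    have hbot : (⊤ : Submodule A (↥(I ^ N) ⧸ J0)) = ⊥ :=
      Submodule.eq_bot_of_le_smul_of_le_jacobson_bot m ⊤ (Module.finite_def.mp inferInstance)
        htop (by rw [IsLocalRing.jacobson_eq_maximalIdeal ⊥ bot_ne_top])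
    intro x
    have hx : Submodule.Quotient.mk (p := J0) x ∈ (⊥ : Submodule A (↥(I ^ N) ⧸ J0)) :=
      hbot ▸ Submodule.mem_top
    simpa [Submodule.Quotient.mk_eq_zero] using hx
  have hgN : g i ^ N ∈ I ^ N := Ideal.pow_mem_pow (hg i) N
  have hJ := hq ⟨g i ^ N, hgN⟩
  have hpow : (⟨monomial 1 (g i), reesAlgebra.monomial_mem.mpr (by simpa using hg i)⟩ :
      ↥(reesAlgebra I)) ^ N = ⟨monomial N (g i ^ N), reesAlgebra.monomial_mem.mpr hgN⟩ :=
    Subtype.ext (by push_cast; rw [monomial_pow, one_mul])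
  have hfq : (Φ ⟨monomial 1 (g i), reesAlgebra.monomial_mem.mpr (by simpa using hg i)⟩) ^ N ∈ q₀ := by
    rw [← map_pow, hpow]
    exact hJ
  exact hfP (hP.mem_of_pow_mem N (Ideal.toIdeal_homogeneousCore_le 𝒜 P hfq))


end ReesAuxSection

/-- Lemma 3.3: let `(A,m)` be a Noetherian local ring,
`I = (a_1,…,a_ℓ)` an ideal, `a ∈ A`, `R = A[It]` the Rees algebra, and `R ⊆ S` an
integral extension of ℕ-graded rings (the inclusion `Φ` is injective, maps the degree-`n`
piece `I^n t^n` of `R` into `S_n`, and every element of `S` is integral over `R`).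
Then `a ∈ I·S_(q)` for all `q ∈ Proj S` lying over `m` iff `a ∈ I·S_(a_i t)` for each `i`.
(Here `a ∈ I·S_(q)` is rendered as: some homogeneous `s ∉ q` has `a·s ∈ I·S`, and
`a ∈ I·S_(a_i t)` as: `a·(a_i t)^N ∈ I·S` for some `N`.) -/
theorem mem_IS_proj_iff_mem_IS_affine {A : Type*} [CommRing A] [IsNoetherianRing A]
    [IsLocalRing A] (I : Ideal A) {ℓ : ℕ} (g : Fin ℓ → A) (hg : ∀ i, g i ∈ I)
    (hI : I = Ideal.span (Set.range g)) (a : A)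
    {S : Type*} [CommRing S] [Algebra A S] (𝒜 : ℕ → Submodule A S) [GradedAlgebra 𝒜]
    (Φ : ↥(reesAlgebra I) →ₐ[A] S) (hΦinj : Function.Injective Φ)
    (hΦgr : ∀ (n : ℕ) (x : A) (hx : x ∈ I ^ n),
      Φ ⟨Polynomial.monomial n x, reesAlgebra.monomial_mem.mpr hx⟩ ∈ 𝒜 n)
    (hSint : ∀ s : S, ∃ p : Polynomial ↥(reesAlgebra I), p.Monic ∧
      Polynomial.eval₂ (Φ : ↥(reesAlgebra I) →+* S) s p = 0) :
    (∀ q : Ideal S, q.IsPrime → Ideal.IsHomogeneous 𝒜 q →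
      (∃ n : ℕ, 0 < n ∧ ∃ s ∈ 𝒜 n, s ∉ q) →
      Ideal.comap (algebraMap A S) q = IsLocalRing.maximalIdeal A →
      ∃ (n : ℕ) (s : S), s ∈ 𝒜 n ∧ s ∉ q ∧
        algebraMap A S a * s ∈ Ideal.map (algebraMap A S) I) ↔
    (∀ i : Fin ℓ, ∃ N : ℕ,
      algebraMap A S a *
        (Φ ⟨Polynomial.monomial 1 (g i),
          reesAlgebra.monomial_mem.mpr (by simpa using hg i)⟩) ^ N
        ∈ Ideal.map (algebraMap A S) I) := by
  classical
  have hA0 : ∀ b : A, algebraMap A S b ∈ 𝒜 0 := fun b => by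
    rw [Algebra.algebraMap_eq_smul_one]
    exact Submodule.smul_mem _ _ (SetLike.one_mem_graded 𝒜)
  constructor
  · -- forward
    intro H i
    by_contra hN
    push_neg at hN
    -- the colon ideal 𝔍
    set 𝔍 : Ideal S := Submodule.comap (LinearMap.mulLeft S (algebraMap A S a))
      (Ideal.map (algebraMap A S) I) with h𝔍def
    have mem𝔍 : ∀ s : S, s ∈ 𝔍 ↔ algebraMap A S a * s ∈ Ideal.map (algebraMap A S) I :=
      fun s => Iff.rfl
    have hIShom : Ideal.IsHomogeneous 𝒜 (Ideal.map (algebraMap A S) I) := by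
      apply Ideal.homogeneous_span
      rintro x ⟨b, hb, rfl⟩
      exact ⟨0, hA0 b⟩
    have h𝔍hom : Ideal.IsHomogeneous 𝒜 𝔍 := by
      intro d s hs
      have h1 : algebraMap A S a * s ∈ Ideal.map (algebraMap A S) I := hs
      have h2 := hIShom d h1
      rw [DirectSum.coe_decompose_mul_of_left_mem_of_le 𝒜 (hA0 a) (Nat.zero_le d)] at h2
      exact (mem𝔍 _).2 (by simpa using h2)
    have hfrad : Φ ⟨Polynomial.monomial 1 (g i),
        reesAlgebra.monomial_mem.mpr (by simpa using hg i)⟩ ∉ 𝔍.radical := by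
      intro hf
      obtain ⟨k, hk⟩ := Ideal.mem_radical_iff.mp hf
      exact hN k hk
    obtain ⟨P, hP, hfP⟩ : ∃ P : Ideal S, (𝔍 ≤ P ∧ P.IsPrime) ∧
        Φ ⟨Polynomial.monomial 1 (g i),
          reesAlgebra.monomial_mem.mpr (by simpa using hg i)⟩ ∉ P := by
      by_contra hcon
      push_neg at hcon
      refine hfrad ?_
      rw [Ideal.radical_eq_sInf]
      exact Submodule.mem_sInf.2 fun P hP => hcon P hP
    obtain ⟨h𝔍P, hPprime⟩ := hP
    -- the monomial witness not in the radical
    obtain ⟨d, c, hd, hc, hX⟩ := ReesAux.witness 𝒜 Φ hI hg hΦgr i P hPprime hfP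
    obtain ⟨P₂, hP₂, hXP₂⟩ : ∃ P₂ : Ideal ↥(reesAlgebra I),
        ((Ideal.comap (Φ : ↥(reesAlgebra I) →+* S) (P.homogeneousCore 𝒜).toIdeal ⊔
          Ideal.map (algebraMap A ↥(reesAlgebra I)) (IsLocalRing.maximalIdeal A)) ≤ P₂ ∧
          P₂.IsPrime) ∧
        (⟨Polynomial.monomial d c, reesAlgebra.monomial_mem.mpr hc⟩ : ↥(reesAlgebra I)) ∉ P₂ := by
      by_contra hcon
      push_neg at hcon
      refine hX ?_
      rw [Ideal.radical_eq_sInf]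
      exact Submodule.mem_sInf.2 fun P₂ hP₂ => hcon P₂ hP₂
    obtain ⟨h𝔅P₂, hP₂prime⟩ := hP₂
    -- integrality, going up
    letI : Algebra ↥(reesAlgebra I) S := (Φ : ↥(reesAlgebra I) →+* S).toAlgebra
    haveI : Algebra.IsIntegral ↥(reesAlgebra I) S := by
      refine ⟨fun s => ?_⟩
      obtain ⟨p, hmonic, heval⟩ := hSint s
      exact ⟨p, hmonic, heval⟩
    haveI : P₂.IsPrime := hP₂prime
    have hcomap_le : ((P.homogeneousCore 𝒜).toIdeal).comap
        (algebraMap ↥(reesAlgebra I) S) ≤ P₂ :=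
      le_trans le_sup_left h𝔅P₂
    obtain ⟨Q, hQge, hQprime, hQcomap⟩ :=
      Ideal.exists_ideal_over_prime_of_isIntegral P₂ ((P.homogeneousCore 𝒜).toIdeal) hcomap_le
    -- the homogeneous prime q
    set q : Ideal S := (Q.homogeneousCore 𝒜).toIdeal with hq
    have hqprime : q.IsPrime := hQprime.homogeneousCore
    have hmq : ∀ u : A, u ∈ IsLocalRing.maximalIdeal A → algebraMap A S u ∈ q := by
      intro u hu
      have h1 : algebraMap A ↥(reesAlgebra I) u ∈
          Ideal.map (algebraMap A ↥(reesAlgebra I)) (IsLocalRing.maximalIdeal A) :=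
        Ideal.mem_map_of_mem _ hu
      have h2 : algebraMap A ↥(reesAlgebra I) u ∈ P₂ := le_trans le_sup_right h𝔅P₂ h1
      have h3 : algebraMap ↥(reesAlgebra I) S (algebraMap A ↥(reesAlgebra I) u) ∈ Q := by
        rw [← hQcomap] at h2
        exact h2
      have h4 : algebraMap A S u ∈ Q := by
        have : algebraMap ↥(reesAlgebra I) S (algebraMap A ↥(reesAlgebra I) u) =
            algebraMap A S u := Φ.commutes u
        rwa [this] at h3
      exact Ideal.mem_homogeneousCore_of_homogeneous_of_mem ⟨0, hA0 u⟩ h4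
    have hcomap_eq : Ideal.comap (algebraMap A S) q = IsLocalRing.maximalIdeal A := by
      refine le_antisymm ?_ ?_
      · exact IsLocalRing.le_maximalIdeal (hqprime.comap (algebraMap A S)).ne_top
      · intro u hu
        exact hmq u hu
    have hwitness : ∃ n : ℕ, 0 < n ∧ ∃ s ∈ 𝒜 n, s ∉ q := by
      refine ⟨d, hd, Φ ⟨Polynomial.monomial d c, reesAlgebra.monomial_mem.mpr hc⟩,
        hΦgr d c hc, ?_⟩
      intro hmem
      have h1 : Φ ⟨Polynomial.monomial d c, reesAlgebra.monomial_mem.mpr hc⟩ ∈ Q :=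
        Ideal.toIdeal_homogeneousCore_le 𝒜 Q hmem
      have h2 : (⟨Polynomial.monomial d c, reesAlgebra.monomial_mem.mpr hc⟩ :
          ↥(reesAlgebra I)) ∈ P₂ := by
        rw [← hQcomap]
        exact h1
      exact hXP₂ h2
    obtain ⟨nn, s, hsmem, hsq, hprod⟩ := H q hqprime ((Q.homogeneousCore 𝒜).isHomogeneous)
      hwitness hcomap_eq
    -- contradiction: s ∈ 𝔍 ≤ core P ≤ P₂-chain... s homogeneous in Q, so in q
    have hs𝔍 : s ∈ 𝔍 := hprod
    have h𝔍core : 𝔍 ≤ (P.homogeneousCore 𝒜).toIdeal := by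
      have h1 := Ideal.homogeneousCore_mono 𝒜 h𝔍P
      rw [← h𝔍hom.toIdeal_homogeneousCore_eq_self]
      exact h1
    have hsQ : s ∈ Q := hQge (h𝔍core hs𝔍)
    have hsq' : s ∈ q := Ideal.mem_homogeneousCore_of_homogeneous_of_mem ⟨nn, hsmem⟩ hsQ
    exact hsq hsq'
  · -- backward
    intro hRHS q hqprime hqhom hwit hqm
    obtain ⟨n₀, hn₀, s₀, hs₀, hs₀q⟩ := hwit
    by_cases hall : ∀ j : Fin ℓ,
        Φ ⟨Polynomial.monomial 1 (g j), reesAlgebra.monomial_mem.mpr (by simpa using hg j)⟩ ∈ q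
    · exact absurd (ReesAux.posdeg_mem 𝒜 Φ hI hg hΦgr hSint hqprime hall hn₀ hs₀) hs₀q
    · push_neg at hall
      obtain ⟨j, hj⟩ := hall
      obtain ⟨N, hNmem⟩ := hRHS j
      refine ⟨N + 1, (Φ ⟨Polynomial.monomial 1 (g j),
        reesAlgebra.monomial_mem.mpr (by simpa using hg j)⟩) ^ (N + 1), ?_, ?_, ?_⟩
      · have := SetLike.pow_mem_graded (N + 1)
          (hΦgr 1 (g j) (by simpa using hg j))
        simpa [smul_eq_mul] using this
      · intro hmem
        exact hj (hqprime.mem_of_pow_mem _ hmem)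
      · rw [pow_succ, ← mul_assoc]
        exact Ideal.mul_mem_right _ _ hNmem
end

section
/- Let A be a Noetherian ring and let I be an ideal of A containing a non-zerodivisor. Then the ideal I_> is integrally closed: every element of A that is integral over I_> belongs to I_>. -/
open Filter Polynomial

/-- An element `b` is weakly subintegral over an ideal `I`:
there are `q ≥ 0` and `a_i ∈ I^i` with
`b^n + ∑_{i=1}^n (n choose i) a_i b^{n-i} = 0` for `q+1 ≤ n ≤ 2q+1`.
The set of such elements is the weak subintegral closure `*I`. -/
def WSubIdeal {A : Type*} [CommRing A] (I : Ideal A) (b : A) : Prop :=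
  ∃ q : ℕ, ∃ a : ℕ → A, (∀ i, a i ∈ I ^ i) ∧
    ∀ n, q + 1 ≤ n → n ≤ 2 * q + 1 →
      b ^ n + ∑ i ∈ Finset.Icc 1 n, (n.choose i : A) * a i * b ^ (n - i) = 0

/-- `a` is integral over the ideal `I`: `a^n + c_1 a^{n-1} + ⋯ + c_n = 0` with `c_i ∈ I^i`.
The set of such elements is the integral closure `Ī` of `I`. -/
def IntegralOverIdeal {A : Type*} [CommRing A] (I : Ideal A) (a : A) : Prop :=
  ∃ n : ℕ, 0 < n ∧ ∃ c : ℕ → A, (∀ i, c i ∈ I ^ i) ∧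
    a ^ n + ∑ i ∈ Finset.Icc 1 n, c i * a ^ (n - i) = 0

/-- `J` is a reduction of `I`: `J ⊆ I` and `J̄ = Ī`. -/
def IsReduction {A : Type*} [CommRing A] (J I : Ideal A) : Prop :=
  J ≤ I ∧ ∀ x, IntegralOverIdeal J x ↔ IntegralOverIdeal I x

/-- `J` is a minimal reduction of `I`. -/
def IsMinimalReduction {A : Type*} [CommRing A] (J I : Ideal A) : Prop :=
  IsReduction J I ∧ ∀ J' : Ideal A, IsReduction J' I → J' ≤ J → J' = J

/-- `ord_I(a) = max {n | a ∈ I^n}` (with value `∞` if `a ∈ ⋂ I^n`). -/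
noncomputable def ordI {A : Type*} [CommRing A] (I : Ideal A) (a : A) : ℕ∞ :=
  ⨆ (n : ℕ) (_ : a ∈ I ^ n), (n : ℕ∞)

/-- The sequence `ord_I(a^n)/n`, whose limit is the asymptotic Samuel function `v̄_I(a)`. -/
noncomputable def samuelSeq {A : Type*} [CommRing A] (I : Ideal A) (a : A) (n : ℕ) : ENNReal :=
  (ordI I (a ^ n) : ENNReal) / (n : ENNReal)

/-- `a ∈ I_>`, i.e. `v̄_I(a) > 1`, where `v̄_I(a)` is the limit of `ord_I(a^n)/n`
(this limit always exists in `[0,∞]`). -/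
def MemIgt {A : Type*} [CommRing A] (I : Ideal A) (a : A) : Prop :=
  ∃ L : ENNReal, 1 < L ∧ Filter.Tendsto (samuelSeq I a) Filter.atTop (nhds L)

section AuxVbar

variable {A : Type*} [CommRing A] (I : Ideal A)

lemma enat_eq_top_of_forall {v : ℕ∞} (h : ∀ m : ℕ, (m : ℕ∞) ≤ v) : v = ⊤ := by
  cases v with
  | top => rfl
  | coe k => have := h (k+1); rw [Nat.cast_le] at this; omega

lemma ordI_ge_iff {z : A} {s : ℕ} : (s : ℕ∞) ≤ ordI I z ↔ z ∈ I ^ s := by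
  constructor
  · intro h
    by_contra hz
    have hs : 1 ≤ s := by
      rcases Nat.eq_zero_or_pos s with rfl | h1
      · simp at hz
      · exact h1
    have hb : ordI I z ≤ ((s - 1 : ℕ) : ℕ∞) := by
      apply iSup₂_le
      intro n hn
      have : n < s := by
        by_contra hns
        exact hz (Ideal.pow_le_pow_right (le_of_not_gt hns) hn)
      exact_mod_cast Nat.le_sub_one_of_lt this
    have := h.trans hb
    rw [Nat.cast_le] at this
    omega
  · intro h
    exact @le_iSup₂ ℕ∞ ℕ (fun n => z ∈ I ^ n) _ (fun n _ => (n : ℕ∞)) s h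

lemma ordI_mul_ge {x y : A} : ordI I x + ordI I y ≤ ordI I (x * y) := by
  rcases eq_or_ne (ordI I x) ⊤ with hx | hx
  · have : ordI I (x * y) = ⊤ := by
      apply enat_eq_top_of_forall
      intro m
      rw [ordI_ge_iff]
      exact Ideal.mul_mem_right y _ ((ordI_ge_iff I).1 (hx ▸ le_top))
    simp [this]
  · rcases eq_or_ne (ordI I y) ⊤ with hy | hy
    · have : ordI I (x * y) = ⊤ := by
        apply enat_eq_top_of_forall
        intro m
        rw [ordI_ge_iff]
        exact Ideal.mul_mem_left _ x ((ordI_ge_iff I).1 (hy ▸ le_top))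
      simp [this]
    · obtain ⟨s, hs⟩ := WithTop.ne_top_iff_exists.1 hx
      obtain ⟨t, ht⟩ := WithTop.ne_top_iff_exists.1 hy
      rw [← hs, ← ht]
      have hxs : x ∈ I ^ s := (ordI_ge_iff I).1 hs.le
      have hyt : y ∈ I ^ t := (ordI_ge_iff I).1 ht.le
      have : x * y ∈ I ^ (s + t) := by
        rw [pow_add]; exact Ideal.mul_mem_mul hxs hyt
      exact_mod_cast (ordI_ge_iff I).2 this

lemma ordI_pow_mul_ge (x : A) (k m : ℕ) :
    (k : ℕ∞) * ordI I (x ^ m) ≤ ordI I (x ^ (k * m)) := by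
  induction k with
  | zero => simp
  | succ k ih =>
    have : x ^ ((k+1) * m) = x ^ (k * m) * x ^ m := by ring
    rw [this]
    calc ((k:ℕ∞)+1) * ordI I (x ^ m) = (k:ℕ∞) * ordI I (x^m) + ordI I (x^m) := by ring
    _ ≤ ordI I (x ^ (k*m)) + ordI I (x^m) := by gcongr
    _ ≤ _ := ordI_mul_ge I

noncomputable def vbar (x : A) : ENNReal := ⨆ k : ℕ, samuelSeq I x (k + 1)

lemma ord_coe_ge_iff {z : A} {s : ℕ} :
    (s : ENNReal) ≤ (ordI I z : ENNReal) ↔ z ∈ I ^ s := by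
  rw [← ENat.toENNReal_coe, ENat.toENNReal_le, ordI_ge_iff]

lemma samuelSeq_le_vbar (x : A) {m : ℕ} (hm : 1 ≤ m) : samuelSeq I x m ≤ vbar I x := by
  have : m = (m - 1) + 1 := by omega
  rw [this]
  exact le_iSup (fun k => samuelSeq I x (k+1)) (m - 1)

lemma samuelSeq_le_mul (x : A) {m k : ℕ} (hm : 1 ≤ m) (hk : 1 ≤ k) :
    samuelSeq I x m ≤ samuelSeq I x (k * m) := by
  unfold samuelSeq
  have h1 : ((k : ENNReal) * (ordI I (x ^ m) : ENNReal)) / ((k : ENNReal) * m) =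
      (ordI I (x ^ m) : ENNReal) / m :=
    ENNReal.mul_div_mul_left _ _ (by exact_mod_cast (by omega : k ≠ 0)) (by simp)
  rw [← h1]
  have h2 : ((k * m : ℕ) : ENNReal) = (k : ENNReal) * m := by push_cast; ring
  rw [h2]
  apply ENNReal.div_le_div_right
  have := ordI_pow_mul_ge I x k m
  calc (k : ENNReal) * (ordI I (x ^ m) : ENNReal)
      = (((k : ℕ∞) * ordI I (x ^ m) : ℕ∞) : ENNReal) := by
        rw [ENat.toENNReal_mul]; simp
    _ ≤ _ := by exact_mod_cast ENat.toENNReal_le.2 this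

lemma vbar_ge_of_mem {x : A} {m s : ℕ} (hm : 1 ≤ m) (h : x ^ m ∈ I ^ s) :
    (s : ENNReal) / m ≤ vbar I x := by
  refine le_trans ?_ (samuelSeq_le_vbar I x hm)
  exact ENNReal.div_le_div_right ((ord_coe_ge_iff I).2 h) _

lemma exists_witness {x : A} {c : ENNReal} (hc : c < vbar I x) :
    ∃ m s : ℕ, 1 ≤ m ∧ x ^ m ∈ I ^ s ∧ c * m < (s : ENNReal) := by
  obtain ⟨k, hk⟩ := lt_iSup_iff.1 hc
  set m := k + 1
  have hm0 : (m : ENNReal) ≠ 0 := by simp [m]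
  have hmtop : (m : ENNReal) ≠ ⊤ := by simp
  have hmul : c * m < (ordI I (x ^ m) : ENNReal) :=
    (ENNReal.lt_div_iff_mul_lt (Or.inl hm0) (Or.inl hmtop)).1 hk
  rcases eq_or_ne (ordI I (x ^ m)) ⊤ with htop | htop
  · have hcm : c * m ≠ ⊤ := by
      intro h; rw [h] at hmul; exact (not_top_lt hmul)
    obtain ⟨s, hs⟩ := ENNReal.exists_nat_gt hcm
    exact ⟨m, s, le_add_self, (ord_coe_ge_iff I).1 (by rw [htop]; simp), hs⟩
  · obtain ⟨s, hs⟩ := WithTop.ne_top_iff_exists.1 htop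
    refine ⟨m, s, le_add_self, (ordI_ge_iff I).1 hs.le, ?_⟩
    rw [← hs] at hmul
    have h' : c * m < ((s : ℕ∞) : ENNReal) := hmul
    simpa using h'

lemma vbar_mul_ge (x y : A) : vbar I x + vbar I y ≤ vbar I (x * y) := by
  rw [vbar, vbar, ENNReal.iSup_add_iSup (f := fun k => samuelSeq I x (k+1))
    (g := fun k => samuelSeq I y (k+1)) ?_]
  · apply iSup_le
    intro k
    have hsum : samuelSeq I x (k+1) + samuelSeq I y (k+1) ≤ samuelSeq I (x*y) (k+1) := by
      unfold samuelSeq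
      rw [ENNReal.div_add_div_same]
      apply ENNReal.div_le_div_right
      rw [mul_pow]
      calc (ordI I (x ^ (k+1)) : ENNReal) + (ordI I (y ^ (k+1)) : ENNReal)
          = ((ordI I (x^(k+1)) + ordI I (y^(k+1)) : ℕ∞) : ENNReal) := by
            rw [ENat.toENNReal_add]
        _ ≤ _ := ENat.toENNReal_le.2 (ordI_mul_ge I)
    exact hsum.trans (samuelSeq_le_vbar I _ (by omega))
  · intro i j
    refine ⟨(i+1) * (j+1) - 1, ?_⟩
    have he : ((i+1) * (j+1) - 1) + 1 = (i+1)*(j+1) := by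
      have : 1 ≤ (i+1)*(j+1) := Nat.mul_pos (by omega) (by omega)
      omega
    show samuelSeq I x (i+1) + samuelSeq I y (j+1) ≤
      samuelSeq I x ((i+1)*(j+1)-1+1) + samuelSeq I y ((i+1)*(j+1)-1+1)
    rw [he]
    gcongr
    · have h := samuelSeq_le_mul I x (m := i+1) (k := j+1) (by omega) (by omega)
      rwa [Nat.mul_comm (j+1) (i+1)] at h
    · exact samuelSeq_le_mul I y (m := j+1) (k := i+1) (by omega) (by omega)

lemma vbar_pow_le (x : A) {k : ℕ} (hk : 1 ≤ k) : vbar I (x ^ k) ≤ k * vbar I x := by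
  apply iSup_le
  intro m
  have h1 : (x ^ k) ^ (m+1) = x ^ (k * (m+1)) := by rw [← pow_mul]
  unfold samuelSeq
  rw [h1]
  have h2 : (ordI I (x ^ (k * (m+1))) : ENNReal) / ((m:ENNReal)+1)
      = (k : ENNReal) * ((ordI I (x ^ (k * (m+1))) : ENNReal) / ((k : ENNReal) * ((m:ENNReal)+1))) := by
    rw [← mul_div_assoc]
    rw [ENNReal.mul_div_mul_left _ _ (by exact_mod_cast (by omega : k ≠ 0)) (by simp)]
  rw [show ((m+1 : ℕ) : ENNReal) = (m : ENNReal) + 1 by push_cast; ring, h2]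
  gcongr
  have h3 : ((k * (m+1) : ℕ) : ENNReal) = (k:ENNReal) * ((m:ENNReal)+1) := by push_cast; ring
  rw [← h3]
  exact samuelSeq_le_vbar I x (Nat.mul_pos (by omega) (by omega))

lemma vbar_pow_ge (x : A) (k : ℕ) : (k : ENNReal) * vbar I x ≤ vbar I (x ^ k) := by
  rw [vbar, ENNReal.mul_iSup]
  apply iSup_le
  intro m
  have : (k : ENNReal) * samuelSeq I x (m+1) ≤ samuelSeq I (x^k) (m+1) := by
    unfold samuelSeq
    rw [← mul_div_assoc]
    apply ENNReal.div_le_div_right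
    rw [← pow_mul]
    calc (k : ENNReal) * (ordI I (x ^ (m+1)) : ENNReal)
        = (((k : ℕ∞) * ordI I (x ^ (m+1)) : ℕ∞) : ENNReal) := by
          rw [ENat.toENNReal_mul]; simp
      _ ≤ _ := by exact_mod_cast ENat.toENNReal_le.2 (ordI_pow_mul_ge I x k (m+1))
  exact this.trans (samuelSeq_le_vbar I _ (by omega))

lemma ordI_le_mul_left (r z : A) : ordI I z ≤ ordI I (r * z) := by
  apply iSup₂_le
  intro n hn
  exact (ordI_ge_iff I).2 (Ideal.mul_mem_left _ r hn)

lemma vbar_smul_ge (r x : A) : vbar I x ≤ vbar I (r * x) := by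
  apply iSup_le
  intro m
  refine le_trans ?_ (samuelSeq_le_vbar I _ (by omega : 1 ≤ m + 1))
  unfold samuelSeq
  apply ENNReal.div_le_div_right
  rw [mul_pow]
  exact ENat.toENNReal_le.2 (ordI_le_mul_left I _ _)

lemma vbar_zero : vbar I (0 : A) = ⊤ := by
  rw [eq_top_iff]
  refine le_trans ?_ (samuelSeq_le_vbar I 0 le_rfl)
  unfold samuelSeq
  have h0 : ordI I ((0:A) ^ 1) = ⊤ := by
    apply enat_eq_top_of_forall
    intro m
    rw [ordI_ge_iff]
    simp
  rw [h0]
  simp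

lemma pow_floor_mem {x : A} {M s : ℕ} (h : x ^ M ∈ I ^ s) (j : ℕ) :
    x ^ j ∈ I ^ (s * (j / M)) := by
  have hj : x ^ j = (x ^ M) ^ (j / M) * x ^ (j % M) := by
    rw [← pow_mul, ← pow_add]
    congr 1
    exact (Nat.div_add_mod j M).symm ▸ rfl
  rw [hj]
  apply Ideal.mul_mem_right
  have := Ideal.pow_mem_pow h (j / M)
  rwa [← pow_mul] at this

lemma add_pow_mem {x y : A} {M s : ℕ} (hM : 1 ≤ M) (hx : x ^ M ∈ I ^ s)
    (hy : y ^ M ∈ I ^ s) (k : ℕ) : (x + y) ^ (M * k) ∈ I ^ (s * (k - 1)) := by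
  rw [add_pow]
  apply Ideal.sum_mem
  intro j hj
  rw [Finset.mem_range] at hj
  apply Ideal.mul_mem_right
  have h1 : x ^ j ∈ I ^ (s * (j / M)) := pow_floor_mem I hx j
  have h2 : y ^ (M * k - j) ∈ I ^ (s * ((M * k - j) / M)) := pow_floor_mem I hy _
  have h3 : x ^ j * y ^ (M * k - j) ∈ I ^ (s * (j / M) + s * ((M * k - j) / M)) := by
    rw [pow_add]; exact Ideal.mul_mem_mul h1 h2
  refine Ideal.pow_le_pow_right ?_ h3
  have hdiv : k ≤ j / M + (M * k - j) / M + 1 := by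
    have hM0 : 0 < M := hM
    have hsplit : j + (M * k - j) = M * k := by omega
    have h4 := Nat.add_div (a := j) (b := M * k - j) hM0
    rw [hsplit, Nat.mul_div_cancel_left k hM0] at h4
    split at h4 <;> omega
  have hgen : ∀ d e : ℕ, k ≤ d + e + 1 → s * (k - 1) ≤ s * d + s * e := by
    intro d e h
    have h5 : k - 1 ≤ d + e := by omega
    calc s * (k - 1) ≤ s * (d + e) := Nat.mul_le_mul_left s h5
    _ = s * d + s * e := by ring
  exact hgen _ _ hdiv

lemma vbar_add_lt {x y : A} {c : ENNReal} (hx : c < vbar I x) (hy : c < vbar I y) :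
    c < vbar I (x + y) := by
  obtain ⟨m, s, hm, hxs, hcs⟩ := exists_witness I hx
  obtain ⟨m', s', hm', hys', hcs'⟩ := exists_witness I hy
  set M := m * m' with hMdef
  set S := min (s * m') (s' * m) with hSdef
  have hM : 1 ≤ M := Nat.mul_pos hm hm'
  have hxM : x ^ M ∈ I ^ S := by
    have h := Ideal.pow_mem_pow hxs m'
    rw [← pow_mul, ← pow_mul] at h
    exact Ideal.pow_le_pow_right (min_le_left _ _) h
  have hyM : y ^ M ∈ I ^ S := by
    have h := Ideal.pow_mem_pow hys' m
    rw [← pow_mul, ← pow_mul] at h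
    rw [hMdef, Nat.mul_comm m m']
    exact Ideal.pow_le_pow_right (min_le_right _ _) h
  have hctop : c ≠ ⊤ := hx.ne_top
  have hcS : c * M < (S : ENNReal) := by
    have l1 : c * m * m' < (s : ENNReal) * m' := by
      rw [ENNReal.mul_lt_mul_iff_left (by exact_mod_cast (by omega : m' ≠ 0)) (by simp)]
      exact hcs
    have l2 : c * m' * m < (s' : ENNReal) * m := by
      rw [ENNReal.mul_lt_mul_iff_left (by exact_mod_cast (by omega : m ≠ 0)) (by simp)]
      exact hcs'
    have hcast : ((M : ℕ) : ENNReal) = (m : ENNReal) * m' := by rw [hMdef]; push_cast; ring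
    rw [hcast]
    rcases min_cases (s * m') (s' * m) with ⟨hmin, _⟩ | ⟨hmin, _⟩ <;>
      rw [hSdef, hmin] <;> push_cast
    · calc c * ((m : ENNReal) * m') = c * m * m' := by ring
      _ < _ := l1
    · calc c * ((m : ENNReal) * m') = c * m' * m := by ring
      _ < _ := l2
  set d := (S : ENNReal) - c * M with hddef
  have hd0 : d ≠ 0 := by
    rw [hddef]
    simpa [tsub_eq_zero_iff_le] using hcS.not_ge
  have hdtop : d ≠ ⊤ := by
    rw [hddef]
    exact (tsub_le_self.trans_lt (by simp : (S:ENNReal) < ⊤)).ne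
  have hcMd : c * M + d = (S : ENNReal) := by
    rw [hddef, add_comm, tsub_add_cancel_of_le hcS.le]
  obtain ⟨k₀, hk₀⟩ := ENNReal.exists_nat_gt (r := (S : ENNReal) / d)
    (ENNReal.div_lt_top (by simp) hd0).ne
  set k := k₀ + 2 with hkdef
  have hSdk : (S : ENNReal) < d * k := by
    have hlt : (S : ENNReal) / d < k := hk₀.trans_le (by exact_mod_cast (by omega : k₀ ≤ k))
    rw [ENNReal.div_lt_iff (Or.inl hd0) (Or.inl hdtop)] at hlt
    rwa [mul_comm] at hlt
  have hMk0 : ((M * k : ℕ) : ENNReal) ≠ 0 := by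
    exact_mod_cast Nat.pos_iff_ne_zero.1 (Nat.mul_pos hM (by omega))
  have hMktop : ((M * k : ℕ) : ENNReal) ≠ ⊤ := ENNReal.natCast_ne_top _
  have hfin : c * ((M * k : ℕ) : ENNReal) ≠ ⊤ :=
    ENNReal.mul_ne_top hctop hMktop
  have hkey : c * ((M * k : ℕ) : ENNReal) < ((S * (k - 1) : ℕ) : ENNReal) := by
    rw [← ENNReal.add_lt_add_iff_right (a := (S : ENNReal)) (by simp)]
    have cast2 : ((S * (k - 1) : ℕ) : ENNReal) + (S : ENNReal) = (S : ENNReal) * k := by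
      have hnat : S * (k - 1) + S = S * k := by
        have hk1 : (k - 1) + 1 = k := by omega
        calc S * (k - 1) + S = S * ((k - 1) + 1) := by ring
        _ = S * k := by rw [hk1]
      exact_mod_cast hnat
    rw [cast2]
    calc c * ((M * k : ℕ) : ENNReal) + (S : ENNReal)
        < c * ((M * k : ℕ) : ENNReal) + d * k := ENNReal.add_lt_add_left hfin hSdk
      _ = (c * M + d) * k := by push_cast; ring
      _ = (S : ENNReal) * k := by rw [hcMd]
  have hmem := add_pow_mem I hM hxM hyM k
  have hge := vbar_ge_of_mem I (m := M * k) (Nat.mul_pos hM (by omega)) hmem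
  refine lt_of_lt_of_le ?_ hge
  rw [ENNReal.lt_div_iff_mul_lt (Or.inl hMk0) (Or.inl hMktop)]
  exact hkey

lemma vbar_add_le {x y : A} {t : ENNReal} (hx : t ≤ vbar I x) (hy : t ≤ vbar I y) :
    t ≤ vbar I (x + y) :=
  le_of_forall_lt fun c hc => vbar_add_lt I (hc.trans_le hx) (hc.trans_le hy)

lemma vbar_sum_le {ι : Type*} (s : Finset ι) (f : ι → A) {t : ENNReal}
    (h : ∀ i ∈ s, t ≤ vbar I (f i)) : t ≤ vbar I (∑ i ∈ s, f i) := by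
  induction s using Finset.cons_induction with
  | empty => simp [vbar_zero]
  | cons i s his ih =>
    rw [Finset.sum_cons]
    exact vbar_add_le I (h i (Finset.mem_cons_self i s))
      (ih fun j hj => h j (Finset.mem_cons_of_mem hj))

lemma fekete (x : A) : Tendsto (samuelSeq I x) atTop (nhds (vbar I x)) := by
  rw [tendsto_order]
  constructor
  · intro c hc
    obtain ⟨m, s, hm, hxs, hcs⟩ := exists_witness I hc
    have hctop : c ≠ ⊤ := hc.ne_top
    set d := (s : ENNReal) - c * m with hddef
    have hd0 : d ≠ 0 := by
      rw [hddef]; simpa [tsub_eq_zero_iff_le] using hcs.not_ge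
    have hdtop : d ≠ ⊤ := by
      rw [hddef]; exact (tsub_le_self.trans_lt (by simp : (s:ENNReal) < ⊤)).ne
    have hcMd : c * m + d = (s : ENNReal) := by
      rw [hddef, add_comm, tsub_add_cancel_of_le hcs.le]
    obtain ⟨k₀, hk₀⟩ := ENNReal.exists_nat_gt (r := (s : ENNReal) / d)
      (ENNReal.div_lt_top (by simp) hd0).ne
    filter_upwards [eventually_ge_atTop (m * (k₀ + 1))] with n hn
    set q := n / m with hqdef
    have hq : k₀ + 1 ≤ q := by
      rw [hqdef, Nat.le_div_iff_mul_le (by omega : 0 < m)]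
      calc (k₀ + 1) * m = m * (k₀ + 1) := Nat.mul_comm _ _
      _ ≤ n := hn
    have hn1 : 1 ≤ n := le_trans (Nat.mul_pos (by omega) (by omega)) hn
    have hmem : x ^ n ∈ I ^ (s * q) := pow_floor_mem I hxs n
    have hord : ((s * q : ℕ) : ENNReal) ≤ (ordI I (x ^ n) : ENNReal) :=
      (ord_coe_ge_iff I).2 hmem
    have hnm : n ≤ m * (q + 1) := by
      have hmod : n % m < m := Nat.mod_lt n (by omega)
      have heq : m * q + n % m = n := Nat.div_add_mod n m
      have hexp : m * (q + 1) = m * q + m := by ring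
      omega
    have hkey : c * n < ((s * q : ℕ) : ENNReal) := by
      have step1 : c * (n : ENNReal) ≤ (c * m) * ((q : ENNReal) + 1) := by
        calc c * (n : ENNReal) ≤ c * ((m * (q + 1) : ℕ) : ENNReal) := by
              gcongr <;> exact_mod_cast hnm
        _ = (c * m) * ((q : ENNReal) + 1) := by push_cast; ring
      have hsd : (s : ENNReal) < d * ((q : ENNReal) + 1) := by
        have h1 : (s : ENNReal) < k₀ * d := by
          rwa [ENNReal.div_lt_iff (Or.inl hd0) (Or.inl hdtop)] at hk₀
        refine h1.trans_le ?_
        rw [mul_comm]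
        gcongr
        have : (k₀ : ENNReal) ≤ (q : ENNReal) := by exact_mod_cast (by omega : k₀ ≤ q)
        exact this.trans (by simp)
      have hfin : (c * m) * ((q : ENNReal) + 1) ≠ ⊤ := by
        apply ENNReal.mul_ne_top (ENNReal.mul_ne_top hctop (by simp))
        simp [ENNReal.add_eq_top]
      have step2 : (c * m) * ((q : ENNReal) + 1) + (s : ENNReal)
          < ((s * q : ℕ) : ENNReal) + (s : ENNReal) := by
        calc (c * m) * ((q : ENNReal) + 1) + (s : ENNReal)
            < (c * m) * ((q : ENNReal) + 1) + d * ((q : ENNReal) + 1) :=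
              ENNReal.add_lt_add_left hfin hsd
          _ = (c * m + d) * ((q : ENNReal) + 1) := by ring
          _ = (s : ENNReal) * ((q : ENNReal) + 1) := by rw [hcMd]
          _ = ((s * q : ℕ) : ENNReal) + (s : ENNReal) := by push_cast; ring
      have step3 : (c * m) * ((q : ENNReal) + 1) < ((s * q : ℕ) : ENNReal) :=
        (ENNReal.add_lt_add_iff_right (by simp)).1 step2
      exact lt_of_le_of_lt step1 step3
    have hne0 : ((n : ℕ) : ENNReal) ≠ 0 := by exact_mod_cast (by omega : n ≠ 0)
    rw [samuelSeq, ENNReal.lt_div_iff_mul_lt (Or.inl hne0) (Or.inl (by simp))]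
    exact lt_of_lt_of_le hkey hord
  · intro c hc
    filter_upwards [eventually_ge_atTop 1] with n hn
    exact (samuelSeq_le_vbar I x hn).trans_lt hc

lemma vbar_pow_ideal {K : Ideal A} (hKv : ∀ x ∈ K, 1 < vbar I x) :
    ∀ i : ℕ, 1 ≤ i → ∀ x ∈ K ^ i, (i : ENNReal) < vbar I x := by
  intro i
  induction i with
  | zero => omega
  | succ i ih =>
    intro _ x hx
    rcases Nat.eq_zero_or_pos i with rfl | hi
    · rw [pow_one] at hx
      simpa using hKv x hx
    · rw [pow_succ] at hx
      refine Submodule.mul_induction_on hx ?_ ?_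
      · intro p hp r hr
        have h1 : (i : ENNReal) < vbar I p := ih hi p hp
        have h2 : (1 : ENNReal) < vbar I r := hKv r hr
        calc ((i + 1 : ℕ) : ENNReal) = (i : ENNReal) + 1 := by push_cast; ring
        _ < vbar I p + vbar I r := ENNReal.add_lt_add h1 h2
        _ ≤ vbar I (p * r) := vbar_mul_ge I p r
      · intro p r h1 h2
        exact vbar_add_lt I h1 h2

end AuxVbar

/-- if `A` is Noetherian and `I` is an ideal containing a non-zerodivisor,
then the ideal `I_> = {a | v̄_I(a) > 1}` is integrally closed: every element of `A`
integral over `I_>` belongs to `I_>`.  (Here `K` is the ideal `I_>`, described by the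
hypothesis `hK`.) -/
theorem igt_integrallyClosed {A : Type*} [CommRing A] [IsNoetherianRing A]
    (I : Ideal A) (hreg : ∃ r ∈ I, r ∈ nonZeroDivisors A)
    (K : Ideal A) (hK : ∀ x : A, x ∈ K ↔ MemIgt I x)
    (a : A) (ha : IntegralOverIdeal K a) : a ∈ K := by
  obtain ⟨n, hn, c, hc, heq⟩ := ha
  have hKv : ∀ x ∈ K, 1 < vbar I x := by
    intro x hx
    obtain ⟨L, hL, hT⟩ := (hK x).1 hx
    rwa [tendsto_nhds_unique hT (fekete I x)] at hL
  have hv1 : 1 < vbar I a := by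
    by_contra hle
    push_neg at hle
    set v := vbar I a with hvdef
    have hvtop : v ≠ ⊤ := (hle.trans_lt (by norm_num)).ne
    have hne : (Finset.Icc 1 n).Nonempty := ⟨1, Finset.mem_Icc.2 ⟨le_refl 1, hn⟩⟩
    set t₀ := (Finset.Icc 1 n).inf' hne (fun i => vbar I (c i * a ^ (n - i))) with ht₀
    have hterm : ∀ i ∈ Finset.Icc 1 n, (n : ENNReal) * v < vbar I (c i * a ^ (n - i)) := by
      intro i hi
      rw [Finset.mem_Icc] at hi
      have hci : (i : ENNReal) < vbar I (c i) := vbar_pow_ideal I hKv i hi.1 (c i) (hc i)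
      have hfin : ((n - i : ℕ) : ENNReal) * v ≠ ⊤ :=
        ENNReal.mul_ne_top (by simp) hvtop
      calc (n : ENNReal) * v = ((i : ENNReal) + ((n - i : ℕ) : ENNReal)) * v := by
            congr 1
            have : i + (n - i) = n := by omega
            exact_mod_cast (congrArg (Nat.cast (R := ENNReal)) this).symm
        _ = (i : ENNReal) * v + ((n - i : ℕ) : ENNReal) * v := by ring
        _ ≤ (i : ENNReal) * 1 + ((n - i : ℕ) : ENNReal) * v := by gcongr
        _ = (i : ENNReal) + ((n - i : ℕ) : ENNReal) * v := by rw [mul_one]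
        _ < vbar I (c i) + ((n - i : ℕ) : ENNReal) * v := by
            exact ENNReal.add_lt_add_right hfin hci
        _ ≤ vbar I (c i) + vbar I (a ^ (n - i)) := by
            gcongr
            exact vbar_pow_ge I a (n - i)
        _ ≤ vbar I (c i * a ^ (n - i)) := vbar_mul_ge I _ _
    have hmin : (n : ENNReal) * v < t₀ := (Finset.lt_inf'_iff hne).2 hterm
    have hsum : t₀ ≤ vbar I (∑ i ∈ Finset.Icc 1 n, c i * a ^ (n - i)) :=
      vbar_sum_le I _ _ (fun i hi => Finset.inf'_le _ hi)
    have hneg : vbar I (∑ i ∈ Finset.Icc 1 n, c i * a ^ (n - i)) ≤ vbar I (a ^ n) := by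
      have heq2 : a ^ n = -(∑ i ∈ Finset.Icc 1 n, c i * a ^ (n - i)) :=
        eq_neg_of_add_eq_zero_left heq
      have : -(∑ i ∈ Finset.Icc 1 n, c i * a ^ (n - i)) =
          (-1 : A) * (∑ i ∈ Finset.Icc 1 n, c i * a ^ (n - i)) := by ring
      rw [heq2, this]
      exact vbar_smul_ge I _ _
    have hup : vbar I (a ^ n) ≤ (n : ENNReal) * v := vbar_pow_le I a hn
    exact absurd (lt_of_lt_of_le hmin (hsum.trans (hneg.trans hup))) (lt_irrefl _)
  exact (hK a).2 ⟨vbar I a, hv1, fekete I a⟩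
end

section
/- Let k be a field and let I be a nonzero monomial ideal in the polynomial ring k[x_1,…,x_n]. Then I_> is a monomial ideal; equivalently, a polynomial f lies in I_> if and only if every monomial occurring in f lies in I_>. -/
open Filter Polynomial

section AuxOrd

open Filter

lemma cast_ord_le_iff {A : Type*} [CommRing A] (I : Ideal A) (x : A) (k : ℕ) :
    (k : ℕ∞) ≤ ordI I x ↔ x ∈ I ^ k := by
  constructor
  · intro h
    by_contra hx
    rcases Nat.eq_zero_or_pos k with rfl | hk
    · exact hx (by simp [Ideal.one_eq_top])
    have hb : ordI I x ≤ ((k - 1 : ℕ) : ℕ∞) := by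
      refine iSup_le fun m => iSup_le fun hm => ?_
      have : m ≤ k - 1 := by
        by_contra hmk
        push_neg at hmk
        exact hx (Ideal.pow_le_pow_right (by omega) hm)
      exact_mod_cast this
    have := h.trans hb
    have : k ≤ k - 1 := by exact_mod_cast this
    omega
  · intro h
    exact le_iSup₂ (f := fun (n : ℕ) (_ : x ∈ I ^ n) => (n : ℕ∞)) k h

lemma ordE_le_iff {A : Type*} [CommRing A] (I : Ideal A) (x : A) (k : ℕ) :
    (k : ENNReal) ≤ (ordI I x : ENNReal) ↔ x ∈ I ^ k := by
  rw [← cast_ord_le_iff I x k, ← ENat.toENNReal_coe, ENat.toENNReal_le]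

lemma enat_eq_top_of_forall_s8 {c : ℕ∞} (h : ∀ k : ℕ, (k : ℕ∞) ≤ c) : c = ⊤ := by
  cases c with
  | top => rfl
  | coe n =>
    have := h (n + 1)
    exact absurd (by exact_mod_cast this) (by omega)

lemma ord_mul_top {A : Type*} [CommRing A] (I : Ideal A) {x : A} (y : A)
    (hx : ordI I x = ⊤) : ordI I (x * y) = ⊤ := by
  apply enat_eq_top_of_forall_s8
  intro kk
  rw [cast_ord_le_iff]
  exact Ideal.mul_mem_right y _ ((cast_ord_le_iff I x kk).1 (hx ▸ le_top))

lemma ord_superadd {A : Type*} [CommRing A] (I : Ideal A) (x y : A) :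
    (ordI I x : ENNReal) + (ordI I y : ENNReal) ≤ (ordI I (x * y) : ENNReal) := by
  cases hx : ordI I x with
  | top => rw [ord_mul_top I y hx]; simp
  | coe kx =>
    cases hy : ordI I y with
    | top => rw [mul_comm x y, ord_mul_top I x hy]; simp
    | coe ky =>
      have hmx : x ∈ I ^ kx := (cast_ord_le_iff I x kx).1 (hx ▸ le_refl _)
      have hmy : y ∈ I ^ ky := (cast_ord_le_iff I y ky).1 (hy ▸ le_refl _)
      have : x * y ∈ I ^ (kx + ky) := by
        rw [pow_add]; exact Ideal.mul_mem_mul hmx hmy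
      have := (ordE_le_iff I (x * y) (kx + ky)).2 this
      simpa using this

lemma fekete_enn (u : ℕ → ENNReal) (hsuper : ∀ p q, u p + u q ≤ u (p + q)) :
    Tendsto (fun n => u n / n) atTop (nhds (⨆ m : ℕ, u (m + 1) / (m + 1))) := by
  set L := ⨆ m : ℕ, u (m + 1) / (m + 1) with hL
  have humono : Monotone u := by
    intro p q hpq
    calc u p ≤ u p + u (q - p) := le_self_add
    _ ≤ u (p + (q - p)) := hsuper _ _
    _ = u q := by rw [Nat.add_sub_cancel' hpq]
  have humul : ∀ (q M : ℕ), (q : ENNReal) * u M ≤ u (q * M) := by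
    intro q M
    induction q with
    | zero => simp
    | succ q ih =>
      have : ((q : ENNReal) + 1) * u M = q * u M + u M := by ring
      push_cast
      rw [this]
      calc (q : ENNReal) * u M + u M ≤ u (q * M) + u M := add_le_add ih le_rfl
      _ ≤ u (q * M + M) := hsuper _ _
      _ = u ((q + 1) * M) := by ring_nf
  refine tendsto_order.2 ⟨?_, ?_⟩
  · intro l hl
    obtain ⟨m, hm⟩ : ∃ m : ℕ, l < u (m + 1) / (m + 1) := by
      simpa [hL, lt_iSup_iff] using hl
    set M := m + 1 with hM
    have hM0 : 0 < M := Nat.succ_pos m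
    set c := u M with hc
    have hltop : l ≠ ⊤ := (hm.trans_le le_top).ne
    by_cases hctop : c = ⊤
    · filter_upwards [eventually_ge_atTop M, eventually_ge_atTop 1] with n hn hn1
      have hun : u n = ⊤ := top_le_iff.1 (hctop ▸ humono hn)
      have : u n / n = ⊤ := by
        rw [hun, ENNReal.top_div_of_ne_top (by simp)]
      rw [this]
      exact lt_top_iff_ne_top.2 hltop
    · have hlc : l * M < c := by
        rw [← ENNReal.lt_div_iff_mul_lt (by simp [hM]) (by simp)]
        exact_mod_cast hm
      set b := l * M with hb
      have hbtop : b ≠ ⊤ := ENNReal.mul_ne_top hltop (by simp)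
      have hcb0 : c - b ≠ 0 := by
        simpa [tsub_eq_zero_iff_le, not_le] using hlc
      obtain ⟨q₀, hq₀⟩ := ENNReal.exists_nat_gt (show b / (c - b) ≠ ⊤ from
        (ENNReal.div_lt_top hbtop hcb0).ne)
      have hkey : b < (q₀ : ENNReal) * (c - b) := by
        rw [ENNReal.div_lt_iff (Or.inl hcb0) (Or.inr hbtop)] at hq₀
        exact hq₀
      filter_upwards [eventually_ge_atTop (q₀ * M + M)] with n hn
      set q := n / M with hq
      have hqq : q₀ ≤ q := Nat.le_div_iff_mul_le hM0 |>.2 (by omega)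
      have hn1 : 1 ≤ n := by
        have hMn : M ≤ n := le_trans (Nat.le_add_left M _) hn
        omega
      have hun : (q : ENNReal) * c ≤ u n :=
        le_trans (humul q M) (humono (Nat.div_mul_le_self n M))
      have hnlt : n < (q + 1) * M := by
        have h1 : M * q + n % M = n := Nat.div_add_mod n M
        have h2 : n % M < M := Nat.mod_lt _ hM0
        calc n = M * q + n % M := h1.symm
        _ < M * q + M := Nat.add_lt_add_left h2 _
        _ = (q + 1) * M := by ring
      have hstep : l * n < u n := by
        have h3 : l * n ≤ ((q : ENNReal) + 1) * b := by
          rw [hb]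
          calc l * (n : ENNReal) ≤ l * (((q + 1) * M : ℕ) : ENNReal) := by
                exact mul_le_mul_right (by exact_mod_cast hnlt.le) l
          _ = ((q : ENNReal) + 1) * (l * M) := by push_cast; ring
        have h4 : ((q : ENNReal) + 1) * b < (q : ENNReal) * c := by
          have hq0b : b < (q : ENNReal) * (c - b) :=
            lt_of_lt_of_le hkey (mul_le_mul_left (by exact_mod_cast hqq) _)
          calc ((q : ENNReal) + 1) * b = q * b + b := by ring
          _ < q * b + q * (c - b) := by
              exact ENNReal.add_lt_add_left (ENNReal.mul_ne_top (by simp) hbtop) hq0b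
          _ = (q : ENNReal) * (b + (c - b)) := by rw [mul_add]
          _ = (q : ENNReal) * c := by rw [add_tsub_cancel_of_le hlc.le]
        exact lt_of_le_of_lt h3 (lt_of_lt_of_le h4 hun)
      rw [ENNReal.lt_div_iff_mul_lt (Or.inl (Nat.cast_ne_zero.2 (by omega) : (n : ENNReal) ≠ 0))
        (Or.inl (by simp))]
      exact hstep
  · intro l' hl'
    filter_upwards [eventually_ge_atTop 1] with n hn
    have hle : u n / n ≤ L := by
      have : u n / n = u ((n - 1) + 1) / (((n - 1) + 1 : ℕ) : ENNReal) := by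
        congr 1 <;> rw [Nat.sub_add_cancel hn]
      rw [this, hL]
      have := le_iSup (fun m => u (m + 1) / ((m + 1 : ℕ) : ENNReal)) (n - 1)
      refine le_trans (le_of_eq ?_) (le_trans this (le_of_eq (by norm_cast)))
      rfl
    exact lt_of_le_of_lt hle hl'

lemma memIgt_iff {A : Type*} [CommRing A] (I : Ideal A) (a : A) :
    MemIgt I a ↔ ∃ m : ℕ, 1 ≤ m ∧ a ^ m ∈ I ^ (m + 1) := by
  set u : ℕ → ENNReal := fun p => (ordI I (a ^ p) : ENNReal) with hu
  have hsuper : ∀ p q, u p + u q ≤ u (p + q) := by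
    intro p q
    have := ord_superadd I (a ^ p) (a ^ q)
    rwa [← pow_add] at this
  constructor
  · rintro ⟨L, hL, hT⟩
    have hev : ∀ᶠ n in atTop, 1 < samuelSeq I a n := hT.eventually (lt_mem_nhds hL)
    obtain ⟨n, hn1, hn⟩ := (eventually_ge_atTop 1).and hev |>.exists
    have hlt : (n : ENNReal) < u n := by
      have := hn
      rw [show samuelSeq I a n = u n / n from rfl] at this
      rw [ENNReal.lt_div_iff_mul_lt (Or.inl (Nat.cast_ne_zero.2 (by omega)))
        (Or.inl (by simp))] at this
      simpa using this
    refine ⟨n, hn1, ?_⟩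
    cases hord : ordI I (a ^ n) with
    | top => exact (cast_ord_le_iff I (a ^ n) (n + 1)).1 (hord ▸ le_top)
    | coe c =>
      have : (n : ENNReal) < ((c : ℕ∞) : ENNReal) := by
        have h := hlt
        simp only [hu] at h
        rwa [hord] at h
      have hnc : n < c := by exact_mod_cast this
      have : a ^ n ∈ I ^ c := (cast_ord_le_iff I (a ^ n) c).1 (hord ▸ le_refl _)
      exact Ideal.pow_le_pow_right (by omega) this
  · rintro ⟨m, hm1, hmem⟩
    refine ⟨⨆ j : ℕ, u (j + 1) / (j + 1), ?_, ?_⟩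
    · have h1 : ((m : ENNReal) + 1) ≤ u m := by
        have := (ordE_le_iff I (a ^ m) (m + 1)).2 hmem
        rw [hu]; push_cast at this ⊢; exact this
      have h2 : (1 : ENNReal) < ((m : ENNReal) + 1) / m := by
        rw [ENNReal.lt_div_iff_mul_lt (Or.inl (Nat.cast_ne_zero.2 (by omega)))
          (Or.inl (by simp))]
        rw [one_mul]
        exact ENNReal.lt_add_right (by simp) one_ne_zero
      have h3 : ((m : ENNReal) + 1) / m ≤ u m / m :=
        ENNReal.div_le_div_right h1 _
      have h4 : u m / m ≤ ⨆ j : ℕ, u (j + 1) / (j + 1) := by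
        have := le_iSup (fun j => u (j + 1) / ((j + 1 : ℕ) : ENNReal)) (m - 1)
        rw [Nat.sub_add_cancel hm1] at this
        exact le_trans this (le_of_eq (by norm_cast))
      exact lt_of_lt_of_le h2 (le_trans h3 h4)
    · exact fekete_enn u hsuper

lemma pow_mem_pow_succ_mul {A : Type*} [CommRing A] {I : Ideal A} {f : A} {p : ℕ}
    (hp : 1 ≤ p) (hf : f ^ p ∈ I ^ (p + 1)) (q : ℕ) (hq : 1 ≤ q) :
    f ^ (p * q) ∈ I ^ (p * q + 1) := by
  have h1 : (f ^ p) ^ q ∈ (I ^ (p + 1)) ^ q := Ideal.pow_mem_pow hf q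
  rw [← pow_mul, ← pow_mul] at h1
  exact Ideal.pow_le_pow_right (by nlinarith) h1

lemma P_add {A : Type*} [CommRing A] {I : Ideal A} {f g : A} {m : ℕ} (hm : 1 ≤ m)
    (hf : f ^ m ∈ I ^ (m + 1)) (hg : g ^ m ∈ I ^ (m + 1)) :
    (f + g) ^ (2 * m * m + m) ∈ I ^ (2 * m * m + m + 1) := by
  set N := 2 * m * m + m with hN
  rw [add_pow]
  apply Ideal.sum_mem
  intro i hi
  rw [Finset.mem_range] at hi
  have hiN : i ≤ N := by omega
  set a := i / m with ha
  set r := i % m with hr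
  set b := (N - i) / m with hb
  set s := (N - i) % m with hs
  have e1 : m * a + r = i := Nat.div_add_mod i m
  have e2 : m * b + s = N - i := Nat.div_add_mod (N - i) m
  have hrm : r < m := Nat.mod_lt _ hm
  have hsm : s < m := Nat.mod_lt _ hm
  have e2' : i + (m * b + s) = N := by rw [e2]; exact Nat.add_sub_cancel' hiN
  have hsum : m * (a + b) + (r + s) = N := by
    have : (m * a + r) + (m * b + s) = N := by rw [e1]; exact e2'
    calc m * (a + b) + (r + s) = (m * a + r) + (m * b + s) := by ring
    _ = N := this
  have harith : N + 1 ≤ (m + 1) * a + (m + 1) * b := by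
    have key : r + s + 1 ≤ a + b := by
      refine Nat.le_of_mul_le_mul_left ?_ (show 0 < m by omega)
      have h2m : r + s + 2 ≤ 2 * m := by omega
      have hX : (m + 1) * (r + s + 2) ≤ (m + 1) * (2 * m) :=
        Nat.mul_le_mul_left _ h2m
      have c1 : m * (r + s + 1) + (r + s) + (2 * m + 2) = (m + 1) * (r + s + 2) + m := by
        ring
      have c4 : m * (r + s + 1) + (r + s) + (2 * m + 2) ≤ 2 * m * m + 3 * m := by
        rw [c1]
        calc (m + 1) * (r + s + 2) + m ≤ (m + 1) * (2 * m) + m := Nat.add_le_add_right hX m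
        _ = 2 * m * m + 3 * m := by ring
      have c5 : 2 * m * m + 3 * m ≤ (2 * m * m + m) + (2 * m + 2) := by
        rw [add_assoc]
        exact Nat.add_le_add_left (by omega) (2 * m * m)
      have c6 : m * (r + s + 1) + (r + s) + (2 * m + 2) ≤ (m * (a + b) + (r + s)) + (2 * m + 2) := by
        rw [hsum, hN]
        exact c4.trans c5
      have c7 : m * (r + s + 1) + (r + s) ≤ m * (a + b) + (r + s) :=
        Nat.le_of_add_le_add_right c6
      exact Nat.le_of_add_le_add_right c7
    calc N + 1 = m * (a + b) + (r + s) + 1 := by rw [hsum]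
    _ ≤ m * (a + b) + (a + b) := by omega
    _ = (m + 1) * a + (m + 1) * b := by ring
  have hfi : f ^ i = (f ^ m) ^ a * f ^ r := by
    rw [← pow_mul, ← pow_add, e1]
  have hgi : g ^ (N - i) = (g ^ m) ^ b * g ^ s := by
    rw [← pow_mul, ← pow_add, e2]
  have hcomb : (f ^ m) ^ a * (g ^ m) ^ b ∈ I ^ ((m + 1) * a + (m + 1) * b) := by
    rw [pow_add]
    exact Ideal.mul_mem_mul
      (by rw [pow_mul]; exact Ideal.pow_mem_pow hf a)
      (by rw [pow_mul]; exact Ideal.pow_mem_pow hg b)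
  apply Ideal.pow_le_pow_right harith
  rw [hfi, hgi]
  have : (f ^ m) ^ a * f ^ r * ((g ^ m) ^ b * g ^ s) * (N.choose i : A)
      = (f ^ m) ^ a * (g ^ m) ^ b * (f ^ r * g ^ s * (N.choose i : A)) := by ring
  rw [this]
  exact Ideal.mul_mem_right _ _ hcomb

/-- The set of elements `f` with `f ^ m ∈ I ^ (m + 1)` for some `m ≥ 1`, as an ideal. -/
def pIdeal {A : Type*} [CommRing A] (I : Ideal A) : Ideal A where
  carrier := {f | ∃ m : ℕ, 1 ≤ m ∧ f ^ m ∈ I ^ (m + 1)}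
  zero_mem' := ⟨1, le_refl 1, by simpa using (I ^ 2).zero_mem⟩
  add_mem' := by
    rintro x y ⟨p, hp1, hp⟩ ⟨q, hq1, hq⟩
    have hx' : x ^ (p * q) ∈ I ^ (p * q + 1) := pow_mem_pow_succ_mul hp1 hp q hq1
    have hy' : y ^ (p * q) ∈ I ^ (p * q + 1) := by
      rw [mul_comm]; exact pow_mem_pow_succ_mul hq1 hq p hp1
    have hm1 : 1 ≤ p * q := Nat.one_le_iff_ne_zero.2 (by positivity)
    exact ⟨2 * (p * q) * (p * q) + (p * q), le_trans hm1 (Nat.le_add_left _ _),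
      P_add hm1 hx' hy'⟩
  smul_mem' := by
    rintro c x ⟨m, h1, h⟩
    exact ⟨m, h1, by rw [smul_eq_mul, mul_pow]; exact Ideal.mul_mem_left _ _ h⟩

lemma mem_pIdeal_iff {A : Type*} [CommRing A] {I : Ideal A} {f : A} :
    f ∈ pIdeal I ↔ ∃ m : ℕ, 1 ≤ m ∧ f ^ m ∈ I ^ (m + 1) := Iff.rfl

end AuxOrd

section AuxPoly

open Pointwise

variable {σ : Type*} [DecidableEq σ] {R : Type*} [CommSemiring R]

lemma coeff_mul_max (m : MonomialOrder σ) {f g : MvPolynomial σ R} {a b : σ →₀ ℕ}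
    (hf : ∀ d ∈ f.support, m.toSyn d ≤ m.toSyn a)
    (hg : ∀ d ∈ g.support, m.toSyn d ≤ m.toSyn b) :
    MvPolynomial.coeff (a + b) (f * g) = MvPolynomial.coeff a f * MvPolynomial.coeff b g := by
  rw [MvPolynomial.coeff_mul]
  apply Finset.sum_eq_single (a, b)
  · rintro ⟨u, v⟩ hp hne
    rw [Finset.HasAntidiagonal.mem_antidiagonal] at hp
    have hp : u + v = a + b := hp
    by_contra h0
    have hu : u ∈ f.support := MvPolynomial.mem_support_iff.2 (left_ne_zero_of_mul h0)
    have hv : v ∈ g.support := MvPolynomial.mem_support_iff.2 (right_ne_zero_of_mul h0)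
    have hsum : m.toSyn u + m.toSyn v = m.toSyn a + m.toSyn b := by
      rw [← map_add, ← map_add, hp]
    have hua : m.toSyn u = m.toSyn a := by
      refine le_antisymm (hf u hu) ?_
      have : m.toSyn a + m.toSyn b ≤ m.toSyn u + m.toSyn b := by
        rw [← hsum]
        exact add_le_add le_rfl (hg v hv)
      exact le_of_add_le_add_right this
    have hu' : u = a := m.toSyn.injective hua
    have hv' : v = b := by
      rwa [hu', add_right_inj] at hp
    exact hne (by rw [hu', hv'])
  · intro h
    refine absurd (Finset.HasAntidiagonal.mem_antidiagonal.2 ?_) h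
    simp

lemma coeff_pow_max (m : MonomialOrder σ) {f : MvPolynomial σ R} {a : σ →₀ ℕ}
    (hf : ∀ d ∈ f.support, m.toSyn d ≤ m.toSyn a) (M : ℕ) :
    MvPolynomial.coeff (M • a) (f ^ M) = (MvPolynomial.coeff a f) ^ M ∧
      ∀ d ∈ (f ^ M).support, m.toSyn d ≤ m.toSyn (M • a) := by
  induction M with
  | zero =>
    constructor
    · simp
    · intro d hd
      rw [pow_zero] at hd
      have : d = 0 := by
        rw [MvPolynomial.mem_support_iff, MvPolynomial.coeff_one] at hd
        by_contra hne
        exact hd (by simp [Ne.symm hne])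
      simp [this]
  | succ M ih =>
    have hstep : (M + 1) • a = M • a + a := by rw [succ_nsmul]
    have hmul := coeff_mul_max m (f := f ^ M) (g := f) ih.2 hf
    constructor
    · rw [pow_succ, hstep, hmul, ih.1, pow_succ]
    · intro d hd
      rw [pow_succ] at hd
      have hd' := MvPolynomial.support_mul _ _ hd
      rw [Finset.mem_add] at hd'
      obtain ⟨d1, hd1, d2, hd2, rfl⟩ := hd'
      rw [hstep, map_add, map_add]
      exact add_le_add (ih.2 d1 hd1) (hf d2 hd2)

omit [DecidableEq σ] in
lemma pow_monomial_span {k : Type*} [Field k]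
    (I : Ideal (MvPolynomial σ k)) (S : Set (σ →₀ ℕ))
    (hS : I = Ideal.span ((fun d => MvPolynomial.monomial d (1 : k)) '' S)) (j : ℕ) :
    ∃ T : Set (σ →₀ ℕ), I ^ j = Ideal.span ((fun d => MvPolynomial.monomial d (1 : k)) '' T) := by
  induction j with
  | zero =>
    refine ⟨{0}, ?_⟩
    rw [pow_zero, Ideal.one_eq_top]
    rw [Set.image_singleton]
    rw [show MvPolynomial.monomial (0 : σ →₀ ℕ) (1 : k) = (1 : MvPolynomial σ k) by simp]
    rw [Ideal.span_singleton_one]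
  | succ j ih =>
    obtain ⟨T, hT⟩ := ih
    refine ⟨T + S, ?_⟩
    rw [pow_succ, hT, hS, Ideal.span_mul_span']
    congr 1
    ext x
    constructor
    · rintro ⟨y, ⟨dy, hdy, rfl⟩, z, ⟨dz, hdz, rfl⟩, rfl⟩
      exact ⟨dy + dz, Set.add_mem_add hdy hdz, by simp [MvPolynomial.monomial_mul]⟩
    · rintro ⟨d, hd, rfl⟩
      rw [Set.mem_add] at hd
      obtain ⟨dy, hdy, dz, hdz, rfl⟩ := hd
      exact ⟨MvPolynomial.monomial dy 1, ⟨dy, hdy, rfl⟩, MvPolynomial.monomial dz 1, ⟨dz, hdz, rfl⟩,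
        by simp [MvPolynomial.monomial_mul]⟩

end AuxPoly

/-- Lemma 4.3: let `k` be a field and `I` a nonzero monomial ideal of
`k[x_1,…,x_n]`.  Then `I_>` is a monomial ideal; equivalently, a polynomial `f` lies in
`I_>` iff every monomial occurring in `f` lies in `I_>`. -/
theorem igt_of_monomialIdeal {k : Type*} [Field k] {n : ℕ}
    (I : Ideal (MvPolynomial (Fin n) k)) (hI0 : I ≠ ⊥)
    (hmono : ∃ S : Set (Fin n →₀ ℕ),
      I = Ideal.span ((fun d => MvPolynomial.monomial d (1 : k)) '' S)) :
    (∃ T : Set (Fin n →₀ ℕ),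
      {f : MvPolynomial (Fin n) k | MemIgt I f}
        = ↑(Ideal.span ((fun d => MvPolynomial.monomial d (1 : k)) '' T))) ∧
    (∀ f : MvPolynomial (Fin n) k, MemIgt I f ↔
      ∀ d ∈ f.support, MemIgt I (MvPolynomial.monomial d (MvPolynomial.coeff d f))) := by
  classical
  obtain ⟨S, hS⟩ := hmono
  have hpowmem : ∀ (j : ℕ) (x : MvPolynomial (Fin n) k), x ∈ I ^ j →
      ∀ d ∈ x.support, MvPolynomial.monomial d (1 : k) ∈ I ^ j := by
    intro j x hx d hd
    obtain ⟨T, hT⟩ := pow_monomial_span I S hS j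
    rw [hT] at hx ⊢
    rw [MvPolynomial.mem_ideal_span_monomial_image] at hx ⊢
    intro e he
    have he' : e = d := by
      rw [MvPolynomial.support_monomial, if_neg one_ne_zero] at he
      exact Finset.mem_singleton.1 he
    subst he'
    exact hx _ hd
  have hmono1 : ∀ (d : Fin n →₀ ℕ) (c : k), c ≠ 0 →
      (MvPolynomial.monomial d c ∈ pIdeal I ↔ MvPolynomial.monomial d (1 : k) ∈ pIdeal I) := by
    intro d c hc
    constructor
    · rintro ⟨m, hm1, hm⟩
      refine ⟨m, hm1, ?_⟩
      rw [MvPolynomial.monomial_pow] at hm ⊢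
      rw [one_pow]
      have : MvPolynomial.monomial (m • d) (1 : k)
          = MvPolynomial.C (c ^ m)⁻¹ * MvPolynomial.monomial (m • d) (c ^ m) := by
        rw [MvPolynomial.C_mul_monomial, inv_mul_cancel₀ (pow_ne_zero _ hc)]
      rw [this]
      exact Ideal.mul_mem_left _ _ hm
    · rintro ⟨m, hm1, hm⟩
      refine ⟨m, hm1, ?_⟩
      rw [MvPolynomial.monomial_pow] at hm ⊢
      rw [one_pow] at hm
      have : MvPolynomial.monomial (m • d) (c ^ m)
          = MvPolynomial.C (c ^ m) * MvPolynomial.monomial (m • d) (1 : k) := by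
        rw [MvPolynomial.C_mul_monomial, mul_one]
      rw [this]
      exact Ideal.mul_mem_left _ _ hm
  have hard : ∀ (t : ℕ) (f : MvPolynomial (Fin n) k), f.support.card ≤ t → f ∈ pIdeal I →
      ∀ d ∈ f.support, MvPolynomial.monomial d (MvPolynomial.coeff d f) ∈ pIdeal I := by
    intro t
    induction t with
    | zero =>
      intro f h0 _ d hd
      rw [Finset.card_eq_zero.1 (Nat.le_zero.1 h0)] at hd
      exact absurd hd (Finset.notMem_empty d)
    | succ t ih =>
      intro f hcard hPf d hd
      obtain ⟨a₀, ha₀, hmax⟩ := Finset.exists_max_image f.support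
        (fun e => (MonomialOrder.lex (σ := Fin n)).toSyn e) ⟨d, hd⟩
      have hlead : MvPolynomial.monomial a₀ (MvPolynomial.coeff a₀ f) ∈ pIdeal I := by
        obtain ⟨M, hM1, hMmem⟩ := hPf
        have hc0 : MvPolynomial.coeff a₀ f ≠ 0 := MvPolynomial.mem_support_iff.1 ha₀
        have hpow := coeff_pow_max (MonomialOrder.lex (σ := Fin n)) (f := f) (a := a₀) hmax M
        have hsup : M • a₀ ∈ (f ^ M).support := by
          rw [MvPolynomial.mem_support_iff, hpow.1]
          exact pow_ne_zero _ hc0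
        have hm1 : MvPolynomial.monomial (M • a₀) (1 : k) ∈ I ^ (M + 1) :=
          hpowmem (M + 1) _ hMmem _ hsup
        refine ⟨M, hM1, ?_⟩
        rw [MvPolynomial.monomial_pow]
        have : MvPolynomial.monomial (M • a₀) (MvPolynomial.coeff a₀ f ^ M)
            = MvPolynomial.C (MvPolynomial.coeff a₀ f ^ M)
              * MvPolynomial.monomial (M • a₀) (1 : k) := by
          rw [MvPolynomial.C_mul_monomial, mul_one]
        rw [this]
        exact Ideal.mul_mem_left _ _ hm1
      by_cases hda : d = a₀
      · subst hda; exact hlead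
      · set g := f - MvPolynomial.monomial a₀ (MvPolynomial.coeff a₀ f) with hg
        have hPg : g ∈ pIdeal I := Submodule.sub_mem _ hPf hlead
        have hco : ∀ e, e ≠ a₀ → MvPolynomial.coeff e g = MvPolynomial.coeff e f := by
          intro e he
          rw [hg, MvPolynomial.coeff_sub, MvPolynomial.coeff_monomial,
            if_neg (fun h => he h.symm), sub_zero]
        have hsub : g.support ⊆ f.support.erase a₀ := by
          intro e he
          rw [MvPolynomial.mem_support_iff] at he
          rcases eq_or_ne e a₀ with rfl | hea
          · exfalso
            apply he
            rw [hg, MvPolynomial.coeff_sub, MvPolynomial.coeff_monomial, if_pos rfl, sub_self]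
          · exact Finset.mem_erase.2 ⟨hea, MvPolynomial.mem_support_iff.2
              (by rw [← hco e hea]; exact he)⟩
        have hcard' : g.support.card ≤ t := by
          have h1 : (f.support.erase a₀).card < f.support.card := Finset.card_erase_lt_of_mem ha₀
          have h2 := Finset.card_le_card hsub
          omega
        have hdg : d ∈ g.support := MvPolynomial.mem_support_iff.2
          (by rw [hco d hda]; exact MvPolynomial.mem_support_iff.1 hd)
        have hres := ih g hcard' hPg d hdg
        rwa [hco d hda] at hres
  have hiff : ∀ f : MvPolynomial (Fin n) k, MemIgt I f ↔ f ∈ pIdeal I :=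
    fun f => memIgt_iff I f
  constructor
  · refine ⟨{d | MvPolynomial.monomial d (1 : k) ∈ pIdeal I}, ?_⟩
    ext f
    simp only [Set.mem_setOf_eq, SetLike.mem_coe]
    rw [hiff f]
    constructor
    · intro hf
      rw [← MvPolynomial.support_sum_monomial_coeff f]
      apply Ideal.sum_mem
      intro d hd
      have hterm := hard f.support.card f le_rfl hf d hd
      have hc0 : MvPolynomial.coeff d f ≠ 0 := MvPolynomial.mem_support_iff.1 hd
      have h1 : MvPolynomial.monomial d (1 : k) ∈ pIdeal I := (hmono1 d _ hc0).1 hterm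
      have heq : MvPolynomial.monomial d (MvPolynomial.coeff d f)
          = MvPolynomial.C (MvPolynomial.coeff d f) * MvPolynomial.monomial d (1 : k) := by
        rw [MvPolynomial.C_mul_monomial, mul_one]
      rw [heq]
      exact Ideal.mul_mem_left _ _ (Ideal.subset_span ⟨d, h1, rfl⟩)
    · intro hf
      have hle : Ideal.span ((fun d => MvPolynomial.monomial d (1 : k))
          '' {d | MvPolynomial.monomial d (1 : k) ∈ pIdeal I}) ≤ pIdeal I := by
        rw [Ideal.span_le]
        rintro x ⟨e, he, rfl⟩
        exact he
      exact hle hf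
  · intro f
    rw [hiff f]
    constructor
    · intro hf d hd
      rw [hiff _]
      exact hard f.support.card f le_rfl hf d hd
    · intro h
      rw [← MvPolynomial.support_sum_monomial_coeff f]
      apply Ideal.sum_mem
      intro d hd
      exact (hiff _).1 (h d hd)
end

section
/- Let I be an ideal of a Noetherian ring A. Then I_> ⊆ *I, i.e., every element a ∈ A with v̄_I(a) > 1 is weakly subintegral over I. -/
open Filter Polynomial

private def lam (q : ℕ) : ℕ → ℤ
  | n =>
    if h : q + 1 ≤ n then
      -1 - ∑ i ∈ (Finset.Icc (q+1) (n-1)).attach, ((n.choose i.1 : ℤ) * lam q i.1)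
    else 0
  decreasing_by
    have := Finset.mem_Icc.mp i.2
    omega

private lemma lam_zero (q i : ℕ) (h : i ≤ q) : lam q i = 0 := by
  rw [lam]; simp [Nat.not_le.mpr (by omega : i < q + 1)]

private lemma lam_sum (q n : ℕ) (h : q + 1 ≤ n) :
    1 + ∑ i ∈ Finset.Icc (q+1) n, (n.choose i : ℤ) * lam q i = 0 := by
  obtain ⟨m, rfl⟩ : ∃ m, n = m + 1 := ⟨n - 1, by omega⟩
  rw [Finset.sum_Icc_succ_top (by omega)]
  have hlam : lam q (m+1) = -1 - ∑ i ∈ Finset.Icc (q+1) m, (((m+1).choose i : ℤ) * lam q i) := by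
    rw [lam, dif_pos h]
    congr 1
    rw [Finset.sum_attach (Finset.Icc (q+1) (m+1-1)) (fun i => ((m+1).choose i : ℤ) * lam q i), Nat.add_sub_cancel]
  rw [hlam, Nat.choose_self]
  push_cast
  ring

private lemma pow_mem_of {A : Type*} [CommRing A] (I : Ideal A) (a : A) (k : ℕ) (hk : 1 ≤ k)
    (h : a ^ k ∈ I ^ (k + 1)) : ∀ i, k * k ≤ i → a ^ i ∈ I ^ i := by
  intro i hi
  have hd : k * (i / k) + i % k = i := Nat.div_add_mod i k
  have hr : i % k < k := Nat.mod_lt _ (by omega)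
  have hq : k ≤ i / k := Nat.le_div_iff_mul_le (by omega) |>.mpr (by nlinarith)
  have h1 : a ^ i = (a ^ k) ^ (i / k) * a ^ (i % k) := by
    rw [← pow_mul, ← pow_add]; congr 1; omega
  have h2 : (a ^ k) ^ (i / k) ∈ (I ^ (k + 1)) ^ (i / k) := Ideal.pow_mem_pow h _
  rw [← pow_mul] at h2
  have h3 : (I ^ ((k+1) * (i / k)) : Ideal A) ≤ I ^ i := by
    apply Ideal.pow_le_pow_right
    have : (k+1) * (i/k) = k * (i/k) + i/k := by ring
    omega
  rw [h1]
  exact Ideal.mul_mem_right _ _ (h3 h2)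

/-- Proposition 4.6 / Lantz's conjecture, generalized:
for an ideal `I` of a Noetherian ring `A`, `I_> ⊆ *I`: every `a ∈ A` with
`v̄_I(a) > 1` is weakly subintegral over `I`. -/
theorem igt_subset_weakSubintegralClosure {A : Type*} [CommRing A] [IsNoetherianRing A]
    (I : Ideal A) (a : A) (ha : MemIgt I a) : WSubIdeal I a := by
  obtain ⟨L, hL, hT⟩ := ha
  obtain ⟨k, hks, hk1⟩ := ((hT.eventually_const_lt hL).and (Filter.eventually_ge_atTop 1)).exists
  -- extract a^k ∈ I^(k+1)
  have hkne : (k : ENNReal) ≠ 0 := by exact_mod_cast (by omega : k ≠ 0)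
  have hdiv : (k : ENNReal) < (ordI I (a ^ k) : ENNReal) := by
    rw [samuelSeq, ENNReal.lt_div_iff_mul_lt] at hks <;> simp_all
  have hlt : (k : ℕ∞) < ordI I (a ^ k) := by exact_mod_cast hdiv
  rw [ordI, lt_iSup_iff] at hlt
  obtain ⟨m, hm⟩ := hlt
  rw [lt_iSup_iff] at hm
  obtain ⟨hmem, hkm⟩ := hm
  have hkm' : k < m := by exact_mod_cast hkm
  have hk : a ^ k ∈ I ^ (k + 1) := Ideal.pow_le_pow_right (by omega) hmem
  -- build the weak subintegral equations
  set q := k * k with hq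
  refine ⟨q, fun i => ((lam q i : ℤ) : A) * a ^ i, ?_, ?_⟩
  · intro i
    rcases le_or_gt i q with hi | hi
    · simp [lam_zero q i hi]
    · exact Ideal.mul_mem_left _ _ (pow_mem_of I a k hk1 hk i (by omega))
  · intro n hn1 hn2
    have hsub : Finset.Icc (q+1) n ⊆ Finset.Icc 1 n := Finset.Icc_subset_Icc (by omega) le_rfl
    rw [← Finset.sum_subset hsub (by
      intro i hi hni
      simp only [Finset.mem_Icc] at hi hni
      have : i ≤ q := by omega
      simp [lam_zero q i this])]
    have hterm : ∀ i ∈ Finset.Icc (q+1) n,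
        (n.choose i : A) * (((lam q i : ℤ) : A) * a ^ i) * a ^ (n - i)
          = (((n.choose i : ℤ) * lam q i : ℤ) : A) * a ^ n := by
      intro i hi
      simp only [Finset.mem_Icc] at hi
      have : a ^ i * a ^ (n - i) = a ^ n := by
        rw [← pow_add]; congr 1; omega
      push_cast
      rw [← this]; ring
    rw [Finset.sum_congr rfl hterm, ← Finset.sum_mul]
    have key := lam_sum q n hn1
    calc a ^ n + (∑ i ∈ Finset.Icc (q+1) n, (((n.choose i : ℤ) * lam q i : ℤ) : A)) * a ^ n
        = (((1 + ∑ i ∈ Finset.Icc (q+1) n, (n.choose i : ℤ) * lam q i : ℤ)) : A) * a ^ n := by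
          push_cast; ring
      _ = 0 := by rw [key]; simp
end

section
/- Let I be an ideal of a Noetherian ring A and let J be any reduction of I. Then I_> ⊆ *J. In particular, I_> is contained in the intersection of *J taken over all minimal reductions J of I. -/
open Filter Polynomial

section Aux
variable {A : Type*} [CommRing A]
open Pointwise

private def cfun (q : ℕ) : ℕ → ℤ
  | n => if n ≤ q then 0 else
      -1 - ∑ j ∈ (Finset.Ico (q+1) n).attach, (n.choose j.1 : ℤ) * cfun q j.1
  decreasing_by exact (Finset.mem_Ico.mp j.2).2

private lemma cfun_eq_zero {q n : ℕ} (h : n ≤ q) : cfun q n = 0 := by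
  rw [cfun]; simp [h]

private lemma cfun_sum {q n : ℕ} (h : q + 1 ≤ n) :
    ∑ j ∈ Finset.Icc (q+1) n, (n.choose j : ℤ) * cfun q j = -1 := by
  have hn : ¬ n ≤ q := by omega
  have hsplit : Finset.Icc (q+1) n = insert n (Finset.Ico (q+1) n) := by
    rw [Finset.Ico_insert_right h]
  rw [hsplit, Finset.sum_insert (by simp)]
  rw [Nat.choose_self]
  conv_lhs => rw [cfun]
  simp only [hn, if_false]
  rw [← Finset.sum_attach (Finset.Ico (q+1) n) (fun j => (n.choose j : ℤ) * cfun q j)]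
  ring

private lemma wsub_of_pow_mem {A : Type*} [CommRing A] (J : Ideal A) (a : A) (q : ℕ)
    (h : ∀ n, q + 1 ≤ n → a ^ n ∈ J ^ n) : WSubIdeal J a := by
  refine ⟨q, fun i => ((cfun q i : ℤ) : A) * a ^ i, ?_, ?_⟩
  · intro i
    by_cases hi : i ≤ q
    · simp [cfun_eq_zero hi]
    · exact Ideal.mul_mem_left _ _ (h i (by omega))
  · intro n hn1 _
    have key : ∀ i ∈ Finset.Icc 1 n,
        (n.choose i : A) * (((cfun q i : ℤ) : A) * a ^ i) * a ^ (n - i)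
          = (((n.choose i : ℤ) * cfun q i : ℤ) : A) * a ^ n := by
      intro i hi
      obtain ⟨hi1, hi2⟩ := Finset.mem_Icc.mp hi
      rw [mul_assoc, mul_assoc, ← pow_add, (by omega : i + (n - i) = n)]
      push_cast; ring
    rw [Finset.sum_congr rfl key, ← Finset.sum_mul, ← Int.cast_sum]
    have hss : ∑ i ∈ Finset.Icc 1 n, (n.choose i : ℤ) * cfun q i
        = ∑ i ∈ Finset.Icc (q+1) n, (n.choose i : ℤ) * cfun q i := by
      symm; apply Finset.sum_subset
      · intro i hi; simp only [Finset.mem_Icc] at hi ⊢; omega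
      · intro i hi hni
        have : i ≤ q := by simp only [Finset.mem_Icc] at hi hni; omega
        rw [cfun_eq_zero this, mul_zero]
    rw [hss, cfun_sum hn1]
    push_cast; ring

private lemma mem_of_le_ordI {A : Type*} [CommRing A] {I : Ideal A} {x : A} {m : ℕ}
    (h : (m : ℕ∞) ≤ ordI I x) : x ∈ I ^ m := by
  by_contra hx
  rcases Nat.eq_zero_or_pos m with hm | hm
  · subst hm; simp at hx
  have hle : ordI I x ≤ ((m - 1 : ℕ) : ℕ∞) := by
    apply iSup_le; intro n; apply iSup_le; intro hn
    have : n ≤ m - 1 := by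
      by_contra hc
      exact hx (Ideal.pow_le_pow_right (by omega) hn)
    exact_mod_cast this
  have := le_trans h hle
  have : m ≤ m - 1 := by exact_mod_cast this
  omega

private lemma nat_lt_ordI {A : Type*} [CommRing A] {I : Ideal A} {x : A} {n : ℕ}
    (h : (n : ENNReal) < (ordI I x : ENNReal)) : ((n+1 : ℕ) : ℕ∞) ≤ ordI I x := by
  have h' : (n : ℕ∞) < ordI I x := by
    by_contra hc
    push_neg at hc
    have : (ordI I x : ENNReal) ≤ (n : ENNReal) := by exact_mod_cast hc
    exact absurd this (not_le.mpr h)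
  exact_mod_cast Order.add_one_le_of_lt h'

private lemma exists_pow_succ {A : Type*} [CommRing A] {I : Ideal A} {a : A}
    (h : MemIgt I a) : ∃ n₀ : ℕ, 0 < n₀ ∧ a ^ n₀ ∈ I ^ (n₀ + 1) := by
  obtain ⟨L, hL, hT⟩ := h
  have hev : ∀ᶠ n in Filter.atTop, samuelSeq I a n ∈ Set.Ioi 1 := hT (Ioi_mem_nhds hL)
  obtain ⟨n₀, hn₀, hge⟩ := (hev.and (Filter.eventually_ge_atTop 1)).exists
  refine ⟨n₀, hge, ?_⟩
  have h1 : (1 : ENNReal) < (ordI I (a ^ n₀) : ENNReal) / (n₀ : ENNReal) := hn₀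
  have hmul : (1 : ENNReal) * (n₀ : ENNReal) < (ordI I (a ^ n₀) : ENNReal) :=
    (ENNReal.lt_div_iff_mul_lt (Or.inl (by positivity)) (Or.inl (ENNReal.natCast_ne_top n₀))).mp h1
  rw [one_mul] at hmul
  exact mem_of_le_ordI (nat_lt_ordI hmul)

private lemma eventually_pow_mem {A : Type*} [CommRing A] {I : Ideal A} {a : A}
    (h : MemIgt I a) (K : ℕ) : ∃ N, ∀ n, N ≤ n → a ^ n ∈ I ^ (n + K) := by
  obtain ⟨n₀, hn₀, hmem⟩ := exists_pow_succ h
  refine ⟨n₀ * (n₀ + K), fun n hn => ?_⟩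
  set j := n / n₀ with hjdef
  set r := n % n₀ with hrdef
  have hjr : n₀ * j + r = n := Nat.div_add_mod n n₀
  have hr : r < n₀ := Nat.mod_lt _ hn₀
  have hj : n₀ + K ≤ j := (Nat.le_div_iff_mul_le hn₀).mpr
    (le_trans (le_of_eq (mul_comm _ _)) hn)
  have h1 : a ^ (n₀ * j) ∈ I ^ ((n₀ + 1) * j) := by
    rw [pow_mul, pow_mul]
    exact Ideal.pow_mem_pow hmem j
  have h2 : a ^ n ∈ I ^ ((n₀ + 1) * j) := by
    rw [show n = n₀ * j + r by omega, pow_add]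
    exact Ideal.mul_mem_right _ _ h1
  exact Ideal.pow_le_pow_right (by nlinarith [hj, hr, hjr]) h2

private lemma prod_mem_pow {I : Ideal A} {ι : Type*} {t : Finset ι} {g : ι → A}
    (h : ∀ i ∈ t, g i ∈ I) : ∏ i ∈ t, g i ∈ I ^ t.card := by
  rw [← Finset.prod_const]
  exact Ideal.prod_mem_prod h

private lemma pad_pow {I J : Ideal A} {x : A} {d e : ℕ} (hx : x ∈ I) (hd : 0 < d)
    (hde : d ≤ e) (h : x ^ d ∈ J * I ^ (d - 1)) : x ^ e ∈ J * I ^ (e - 1) := by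
  have h2 : x ^ e ∈ (J * I ^ (d - 1)) * I ^ (e - d) := by
    have hxe : x ^ e = x ^ d * x ^ (e - d) := by rw [← pow_add]; congr 1; omega
    rw [hxe]
    exact Ideal.mul_mem_mul h (Ideal.pow_mem_pow hx _)
  have h3 : (J * I ^ (d - 1)) * I ^ (e - d) = J * I ^ (e - 1) := by
    rw [mul_assoc, ← pow_add, show (d - 1) + (e - d) = e - 1 by omega]
  rwa [h3] at h2

private lemma integral_pow_mem {I J : Ideal A} (hJI : J ≤ I) {x : A} (hx : x ∈ I)
    (hint : IntegralOverIdeal J x) : ∃ d, 0 < d ∧ x ^ d ∈ J * I ^ (d - 1) := by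
  obtain ⟨n, hn, c, hc, heq⟩ := hint
  refine ⟨n, hn, ?_⟩
  have hsum : ∑ i ∈ Finset.Icc 1 n, c i * x ^ (n - i) ∈ J * I ^ (n - 1) := by
    apply Ideal.sum_mem
    intro i hi
    obtain ⟨hi1, hi2⟩ := Finset.mem_Icc.mp hi
    have h1 : c i ∈ J * J ^ (i - 1) := by
      rw [← pow_succ', show i - 1 + 1 = i by omega]
      exact hc i
    have h2 : c i * x ^ (n - i) ∈ (J * J ^ (i - 1)) * I ^ (n - i) :=
      Ideal.mul_mem_mul h1 (Ideal.pow_mem_pow hx _)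
    have h3 : (J * J ^ (i - 1)) * I ^ (n - i) ≤ J * I ^ (n - 1) := by
      rw [mul_assoc]
      refine Ideal.mul_mono_right ?_
      calc J ^ (i - 1) * I ^ (n - i) ≤ I ^ (i - 1) * I ^ (n - i) :=
            Ideal.mul_mono_left (Ideal.pow_right_mono hJI _)
        _ = I ^ (n - 1) := by rw [← pow_add, show (i - 1) + (n - i) = n - 1 by omega]
    exact h3 h2
  have : x ^ n = -∑ i ∈ Finset.Icc 1 n, c i * x ^ (n - i) := by linear_combination heq
  rw [this]
  exact neg_mem hsum

private lemma uniform_pow_mem {I J : Ideal A} (s : Finset A)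
    (hsI : ∀ x ∈ s, x ∈ I)
    (h : ∀ x ∈ s, ∃ d, 0 < d ∧ x ^ d ∈ J * I ^ (d - 1)) :
    ∃ d, 0 < d ∧ ∀ x ∈ s, x ^ d ∈ J * I ^ (d - 1) := by
  induction s using Finset.cons_induction with
  | empty => exact ⟨1, one_pos, by simp⟩
  | cons a s ha ih =>
    obtain ⟨d₁, hd₁, hmem₁⟩ := h a (Finset.mem_cons_self a s)
    obtain ⟨d₂, hd₂, hmem₂⟩ := ih (fun x hx => hsI x (Finset.mem_cons_of_mem hx))
      (fun x hx => h x (Finset.mem_cons_of_mem hx))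
    refine ⟨max d₁ d₂, lt_of_lt_of_le hd₁ (le_max_left _ _), ?_⟩
    intro x hx
    rcases Finset.mem_cons.mp hx with rfl | hx
    · exact pad_pow (hsI x (Finset.mem_cons_self x s)) hd₁ (le_max_left _ _) hmem₁
    · exact pad_pow (hsI x (Finset.mem_cons_of_mem hx)) hd₂ (le_max_right _ _) (hmem₂ x hx)

private lemma key_step {I J : Ideal A} (s : Finset A) (hspan : Ideal.span ↑s = I)
    {d : ℕ} (hd : 0 < d) (hpow : ∀ x ∈ s, x ^ d ∈ J * I ^ (d - 1)) :
    I ^ (s.card * (d - 1) + 1) ≤ J * I ^ (s.card * (d - 1)) := by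
  classical
  set k := s.card * (d - 1) with hk
  have hsI : ∀ x ∈ s, x ∈ I := fun x hx => hspan ▸ Ideal.subset_span hx
  have hle : Ideal.span ((↑s : Set A) ^ (k + 1)) ≤ J * I ^ k := by
    rw [Ideal.span_le]
    intro x hx
    rw [Set.mem_pow] at hx
    obtain ⟨f, hf⟩ := hx
    set g : Fin (k + 1) → A := fun i => (f i : A) with hg
    have hgs : ∀ i, g i ∈ s := fun i => (f i).2
    have hcard : s.card * (d - 1) < (Finset.univ : Finset (Fin (k + 1))).card := by
      simp only [Finset.card_univ, Fintype.card_fin]; omega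
    obtain ⟨y, hy, hylt⟩ :=
      Finset.exists_lt_card_fiber_of_mul_lt_card_of_maps_to (fun i _ => hgs i) hcard
    set t := Finset.filter (fun i => g i = y) Finset.univ with ht
    set m := t.card with hm
    have hdm : d ≤ m := by omega
    have hcc' : m + (Finset.filter (fun i => ¬ g i = y) Finset.univ).card = k + 1 := by
      have h0 := Finset.card_filter_add_card_filter_not
        (s := (Finset.univ : Finset (Fin (k + 1)))) (p := fun i => g i = y)
      simpa using h0
    have hmk : m ≤ k + 1 := by omega
    have hxeq : x = y ^ m * ∏ i ∈ Finset.filter (fun i => ¬ g i = y) Finset.univ, g i := by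
      have h1 : x = ∏ i, g i := by rw [← hf, List.prod_ofFn]
      rw [h1, ← Finset.prod_filter_mul_prod_filter_not Finset.univ (fun i => g i = y) g]
      congr 1
      rw [Finset.prod_congr rfl (fun i hi => (Finset.mem_filter.mp hi).2), Finset.prod_const]
    have hyI : y ∈ I := hsI y hy
    have h1 : y ^ m ∈ J * I ^ (m - 1) := pad_pow hyI hd hdm (hpow y hy)
    have h2 : ∏ i ∈ Finset.filter (fun i => ¬ g i = y) Finset.univ, g i
        ∈ I ^ (Finset.filter (fun i => ¬ g i = y) Finset.univ).card :=
      prod_mem_pow (fun i _ => hsI _ (hgs i))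
    have hcc : (Finset.filter (fun i => ¬ g i = y) Finset.univ).card = k + 1 - m := by omega
    rw [hcc] at h2
    have h3 := Ideal.mul_mem_mul h1 h2
    have h4 : (J * I ^ (m - 1)) * I ^ (k + 1 - m) = J * I ^ k := by
      rw [mul_assoc, ← pow_add, show (m - 1) + (k + 1 - m) = k by omega]
    rw [h4] at h3
    rw [SetLike.mem_coe, hxeq]
    exact h3
  calc I ^ (k + 1) = Ideal.span ((↑s : Set A) ^ (k + 1)) := by
        rw [← hspan]; exact Submodule.span_pow _ _
    _ ≤ J * I ^ k := hle

private lemma reduction_pow [IsNoetherianRing A] {I J : Ideal A} (h : IsReduction J I) :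
    ∃ k, ∀ n, I ^ (n + k) ≤ J ^ n := by
  obtain ⟨s, hspan⟩ := IsNoetherian.noetherian I
  have hsI : ∀ x ∈ s, x ∈ I := fun x hx => hspan ▸ Ideal.subset_span hx
  have hint : ∀ x ∈ s, ∃ d, 0 < d ∧ x ^ d ∈ J * I ^ (d - 1) := by
    intro x hx
    refine integral_pow_mem h.1 (hsI x hx) ((h.2 x).mpr ?_)
    refine ⟨1, one_pos, fun i => if i = 1 then -x else 0, ?_, ?_⟩
    · intro i
      by_cases hi : i = 1
      · subst hi; simp only [if_pos rfl, pow_one]; exact neg_mem (hsI x hx)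
      · simp [hi]
    · simp
  obtain ⟨d, hd, hpow⟩ := uniform_pow_mem s hsI hint
  set k := s.card * (d - 1) with hk
  have hkey : I ^ (k + 1) ≤ J * I ^ k := key_step s hspan hd hpow
  refine ⟨k, fun n => ?_⟩
  have hmain : ∀ n, I ^ (n + k) ≤ J ^ n * I ^ k := by
    intro n
    induction n with
    | zero => simp
    | succ n ih =>
      calc I ^ (n + 1 + k) = I ^ (n + k) * I := by
            rw [← pow_succ]; congr 1; omega
        _ ≤ (J ^ n * I ^ k) * I := Ideal.mul_mono_left ih
        _ = J ^ n * I ^ (k + 1) := by rw [mul_assoc, ← pow_succ]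
        _ ≤ J ^ n * (J * I ^ k) := Ideal.mul_mono_right hkey
        _ = J ^ (n + 1) * I ^ k := by rw [← mul_assoc, ← pow_succ]
  exact le_trans (hmain n) Ideal.mul_le_left

end Aux

/-- Corollary 4.7: for an ideal `I` of a Noetherian ring `A` and any
reduction `J` of `I`, one has `I_> ⊆ *J`; in particular `I_>` is contained in the
intersection of `*J` over all minimal reductions `J` of `I`. -/
theorem igt_subset_weakSubintegralClosure_of_reduction {A : Type*} [CommRing A]
    [IsNoetherianRing A] (I : Ideal A) :
    (∀ J : Ideal A, IsReduction J I → ∀ a : A, MemIgt I a → WSubIdeal J a) ∧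
    (∀ a : A, MemIgt I a → ∀ J : Ideal A, IsMinimalReduction J I → WSubIdeal J a) := by
  have main : ∀ J : Ideal A, IsReduction J I → ∀ a : A, MemIgt I a → WSubIdeal J a := by
    intro J hred a ha
    obtain ⟨k, hk⟩ := reduction_pow hred
    obtain ⟨N, hN⟩ := eventually_pow_mem ha k
    refine wsub_of_pow_mem J a N (fun n hn => ?_)
    have h1 : a ^ n ∈ I ^ (n + k) := hN n (by omega)
    exact hk n h1
  exact ⟨main, fun a ha J hmin => main J hmin.1 a ha⟩
end
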